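/- arXiv:2009.13040 — 3 statements merged into one kernel-verified Lean document; each statement's English description precedes it below -/
import Mathlib

section
/- β ∈ R^{d×k} is a stationary point of the population negative log-likelihood L of fitting a k-component Gaussian mixture to a true k*-component mixture if and only if for all i ∈ [k]: Σ_{j∈[k]} β_j Σ_{s∈[k*]} E_s[Ψ_i Ψ_j] = Σ_{s∈[k*]} θ*_s E_s[Ψ_i], where E_s denotes expectation under N(θ*_s, σ²I_d). -/
open MeasureTheory Real

/-- Density of `N(μ, σ²I_d)` on `ℝ^d`. -/
noncomputable def gaussDensity {d : ℕ} (σ : ℝ) (μ x : EuclideanSpace ℝ (Fin d)) : ℝ :=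
  ((Real.sqrt (2 * π) * σ)⁻¹) ^ d * Real.exp (-‖x - μ‖ ^ 2 / (2 * σ ^ 2))

/-- Density of an equally weighted Gaussian mixture with centers `θ` and covariance `σ²I_d`. -/
noncomputable def mixDensity {d n : ℕ} (σ : ℝ) (θ : Fin n → EuclideanSpace ℝ (Fin d))
    (x : EuclideanSpace ℝ (Fin d)) : ℝ :=
  (n : ℝ)⁻¹ * ∑ s, gaussDensity σ (θ s) x

/-- Association coefficient `ψ_j(x)` of a data point `x` with the fitted center `β j`. -/
noncomputable def assocCoef {d k : ℕ} (σ : ℝ) (β : Fin k → EuclideanSpace ℝ (Fin d))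
    (j : Fin k) (x : EuclideanSpace ℝ (Fin d)) : ℝ :=
  Real.exp (-‖x - β j‖ ^ 2 / (2 * σ ^ 2)) / ∑ ℓ, Real.exp (-‖x - β ℓ‖ ^ 2 / (2 * σ ^ 2))

section Aux

variable {d k : ℕ}
local notation "E" => EuclideanSpace ℝ (Fin d)

/-- Unnormalized Gaussian kernel. -/
noncomputable def gg (σ : ℝ) (μ x : EuclideanSpace ℝ (Fin d)) : ℝ :=
  Real.exp (-‖x - μ‖ ^ 2 / (2 * σ ^ 2))

/-- Denominator of the association coefficients. -/
noncomputable def SS (σ : ℝ) (β : Fin k → EuclideanSpace ℝ (Fin d))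
    (x : EuclideanSpace ℝ (Fin d)) : ℝ := ∑ ℓ, gg σ (β ℓ) x

lemma gg_pos (σ : ℝ) (μ x : E) : 0 < gg σ μ x := Real.exp_pos _
lemma continuous_gg (σ : ℝ) (μ : E) : Continuous (gg σ μ) := by unfold gg; fun_prop
lemma SS_pos (σ : ℝ) (β : Fin k → E) (x : E) [Nonempty (Fin k)] : 0 < SS σ β x :=
  Finset.sum_pos (fun ℓ _ ↦ gg_pos σ (β ℓ) x) Finset.univ_nonempty
lemma continuous_SS (σ : ℝ) (β : Fin k → E) : Continuous (SS σ β) :=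
  continuous_finset_sum _ fun ℓ _ ↦ continuous_gg σ (β ℓ)
lemma assocCoef_eq (σ : ℝ) (β : Fin k → E) (j : Fin k) (x : E) :
    assocCoef σ β j x = gg σ (β j) x / SS σ β x := rfl
lemma gaussDensity_eq (σ : ℝ) (μ x : E) :
    gaussDensity σ μ x = ((Real.sqrt (2 * π) * σ)⁻¹) ^ d * gg σ μ x := rfl

lemma continuous_assocCoef (σ : ℝ) (β : Fin k → E) (j : Fin k) [Nonempty (Fin k)] :
    Continuous (assocCoef σ β j) := by
  simp only [funext fun x ↦ assocCoef_eq σ β j x]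
  exact (continuous_gg σ (β j)).div (continuous_SS σ β) fun x ↦ (SS_pos σ β x).ne'

lemma continuous_gaussDensity (σ : ℝ) (μ : E) : Continuous (gaussDensity σ μ) := by
  unfold gaussDensity; fun_prop

lemma assocCoef_nonneg (σ : ℝ) (β : Fin k → E) (j : Fin k) (x : E) [Nonempty (Fin k)] :
    0 ≤ assocCoef σ β j x := by
  rw [assocCoef_eq]
  exact div_nonneg (gg_pos σ (β j) x).le (SS_pos σ β x).le

lemma assocCoef_le_one (σ : ℝ) (β : Fin k → E) (j : Fin k) (x : E) [Nonempty (Fin k)] :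
    assocCoef σ β j x ≤ 1 := by
  rw [assocCoef_eq, div_le_one (SS_pos σ β x)]
  exact Finset.single_le_sum (f := fun ℓ ↦ gg σ (β ℓ) x)
    (fun ℓ _ ↦ (gg_pos σ (β ℓ) x).le) (Finset.mem_univ j)

lemma abs_assocCoef_le_one (σ : ℝ) (β : Fin k → E) (j : Fin k) (x : E) [Nonempty (Fin k)] :
    |assocCoef σ β j x| ≤ 1 := by
  rw [abs_of_nonneg (assocCoef_nonneg σ β j x)]
  exact assocCoef_le_one σ β j x

lemma sum_assocCoef (σ : ℝ) (β : Fin k → E) (x : E) [Nonempty (Fin k)] :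
    ∑ ℓ, assocCoef σ β ℓ x = 1 := by
  simp only [assocCoef_eq]
  rw [← Finset.sum_div]
  exact div_self (SS_pos σ β x).ne'

lemma gaussDensity_pos {σ : ℝ} (hσ : 0 < σ) (μ x : E) : 0 < gaussDensity σ μ x := by
  rw [gaussDensity_eq]
  have h2π : (0:ℝ) < Real.sqrt (2 * π) := Real.sqrt_pos.2 (by positivity)
  exact mul_pos (by positivity) (gg_pos σ μ x)

/-! ### Integrability -/

lemma integrable_rexp_neg_mul_sq_norm {b : ℝ} (hb : 0 < b) :
    Integrable (fun x : E ↦ rexp (-b * ‖x‖ ^ 2)) := by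
  have h := (GaussianFourier.integrable_cexp_neg_mul_sq_norm_add (V := E)
    (b := (b : ℂ)) (by simpa using hb) 0 0).norm
  refine h.congr (Filter.Eventually.of_forall fun x ↦ ?_)
  simp only [Complex.norm_exp]
  norm_num [← Complex.ofReal_pow]

lemma integrable_gauss {σ : ℝ} (hσ : 0 < σ) (μ : E) :
    Integrable (fun x : E ↦ rexp (-‖x - μ‖ ^ 2 / (2 * σ ^ 2))) := by
  have hb : (0:ℝ) < (2 * σ ^ 2)⁻¹ := by positivity
  have h := (integrable_rexp_neg_mul_sq_norm (d := d) hb).comp_sub_right μ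
  refine h.congr (Filter.Eventually.of_forall fun x ↦ ?_)
  ring_nf

lemma integrable_gauss_poly {σ : ℝ} (hσ : 0 < σ) (μ : E) :
    Integrable (fun x : E ↦ (1 + ‖x‖) * rexp (-‖x - μ‖ ^ 2 / (2 * σ ^ 2))) := by
  set b : ℝ := (2 * σ ^ 2)⁻¹ with hbdef
  have hb : (0:ℝ) < b := by positivity
  set C : ℝ := 1 + ‖μ‖ + max 1 (2 / b) with hCdef
  have hmain : ∀ x : E, (1 + ‖x‖) * rexp (-‖x - μ‖ ^ 2 / (2 * σ ^ 2))
      ≤ C * rexp (-(b/2) * ‖x - μ‖ ^ 2) := by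
    intro x
    have hexp : rexp (-‖x - μ‖ ^ 2 / (2 * σ ^ 2))
        = rexp (-(b/2) * ‖x - μ‖ ^ 2) * rexp (-(b/2) * ‖x - μ‖ ^ 2) := by
      rw [← Real.exp_add]; congr 1; rw [hbdef]; field_simp; ring
    set t : ℝ := ‖x - μ‖ with htdef
    have ht : 0 ≤ t := norm_nonneg _
    have hkey : t * rexp (-(b/2) * t ^ 2) ≤ max 1 (2 / b) := by
      rcases le_total t 1 with h1 | h1
      · calc t * rexp (-(b/2) * t ^ 2) ≤ 1 * 1 := by
              apply mul_le_mul h1 (Real.exp_le_one_iff.2 (by nlinarith))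
                (Real.exp_nonneg _) zero_le_one
            _ ≤ _ := by simp
      · have h2 : t ≤ t ^ 2 := by nlinarith
        have h3 : t ^ 2 ≤ (2 / b) * rexp ((b/2) * t ^ 2) := by
          have hexpge := Real.add_one_le_exp ((b/2) * t ^ 2)
          rw [div_mul_eq_mul_div, le_div_iff₀ hb]
          nlinarith [Real.exp_nonneg ((b/2) * t^2)]
        calc t * rexp (-(b/2) * t ^ 2) ≤ t ^ 2 * rexp (-(b/2) * t ^ 2) := by
              apply mul_le_mul_of_nonneg_right h2 (Real.exp_nonneg _)
          _ ≤ (2 / b) * rexp ((b/2) * t ^ 2) * rexp (-(b/2) * t ^ 2) := by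
              apply mul_le_mul_of_nonneg_right h3 (Real.exp_nonneg _)
          _ = 2 / b := by rw [mul_assoc, ← Real.exp_add]; simp
          _ ≤ max 1 (2 / b) := le_max_right _ _
    have hx : ‖x‖ ≤ ‖μ‖ + t := by
      calc ‖x‖ = ‖(x - μ) + μ‖ := by rw [sub_add_cancel]
        _ ≤ ‖x - μ‖ + ‖μ‖ := norm_add_le _ _
        _ = ‖μ‖ + t := by rw [htdef]; ring
    have hE : (0:ℝ) ≤ rexp (-(b/2) * t ^ 2) := Real.exp_nonneg _
    have hE1 : rexp (-(b/2) * t ^ 2) ≤ 1 := Real.exp_le_one_iff.2 (by nlinarith)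
    calc (1 + ‖x‖) * rexp (-‖x - μ‖ ^ 2 / (2 * σ ^ 2))
        = (1 + ‖x‖) * rexp (-(b/2) * t ^ 2) * rexp (-(b/2) * t ^ 2) := by rw [hexp]; ring
      _ ≤ ((1 + ‖μ‖ + t) * rexp (-(b/2) * t ^ 2)) * rexp (-(b/2) * t ^ 2) := by
          apply mul_le_mul_of_nonneg_right _ hE
          apply mul_le_mul_of_nonneg_right _ hE
          linarith
      _ = ((1 + ‖μ‖) * rexp (-(b/2) * t ^ 2) + t * rexp (-(b/2) * t ^ 2))
            * rexp (-(b/2) * t ^ 2) := by ring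
      _ ≤ ((1 + ‖μ‖) * 1 + max 1 (2 / b)) * rexp (-(b/2) * t ^ 2) := by
          apply mul_le_mul_of_nonneg_right _ hE
          have := mul_le_mul_of_nonneg_left hE1 (by positivity : (0:ℝ) ≤ 1 + ‖μ‖)
          linarith
      _ = C * rexp (-(b/2) * t ^ 2) := by rw [hCdef]; ring
  have hint : Integrable (fun x : E ↦ C * rexp (-(b/2) * ‖x - μ‖ ^ 2)) := by
    have hb2 : (0:ℝ) < b / 2 := by positivity
    exact ((integrable_rexp_neg_mul_sq_norm (d := d) hb2).comp_sub_right μ).const_mul C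
  refine hint.mono' ?_ (Filter.Eventually.of_forall fun x ↦ ?_)
  · apply Continuous.aestronglyMeasurable; fun_prop
  · rw [Real.norm_eq_abs, abs_of_nonneg (by positivity)]
    exact hmain x

lemma integrable_gd_mul {σ : ℝ} (hσ : 0 < σ) (θ0 : E) {w : E → ℝ} (hw : Continuous w)
    {M : ℝ} (hb : ∀ x, |w x| ≤ M * (1 + ‖x‖)) :
    Integrable (fun x : E ↦ gaussDensity σ θ0 x * w x) := by
  set Cd : ℝ := ((Real.sqrt (2 * π) * σ)⁻¹) ^ d with hCd
  have hCd0 : 0 < Cd := by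
    rw [hCd]
    have h2π : (0:ℝ) < Real.sqrt (2 * π) := Real.sqrt_pos.2 (by positivity)
    positivity
  have hint : Integrable
      (fun x : E ↦ (Cd * M) * ((1 + ‖x‖) * rexp (-‖x - θ0‖ ^ 2 / (2 * σ ^ 2)))) :=
    (integrable_gauss_poly hσ θ0).const_mul _
  refine hint.mono' (((continuous_gaussDensity σ θ0).mul hw).aestronglyMeasurable)
    (Filter.Eventually.of_forall fun x ↦ ?_)
  rw [Real.norm_eq_abs, abs_mul]
  have h1 : |gaussDensity σ θ0 x| = Cd * gg σ θ0 x := by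
    rw [abs_of_pos (gaussDensity_pos hσ θ0 x), gaussDensity_eq]
  rw [h1]
  have h2 : Cd * gg σ θ0 x * |w x| ≤ Cd * gg σ θ0 x * (M * (1 + ‖x‖)) := by
    apply mul_le_mul_of_nonneg_left (hb x)
    exact mul_nonneg hCd0.le (gg_pos σ θ0 x).le
  refine h2.trans ?_
  have hgg : gg σ θ0 x = rexp (-‖x - θ0‖ ^ 2 / (2 * σ ^ 2)) := rfl
  rw [hgg]; ring_nf; rfl

lemma integrable_gd_smul {σ : ℝ} (hσ : 0 < σ) (θ0 c : E) {w : E → ℝ} (hw : Continuous w)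
    (hb : ∀ x, |w x| ≤ 1) :
    Integrable (fun x : E ↦ (gaussDensity σ θ0 x * w x) • (c - x)) := by
  set Cd : ℝ := ((Real.sqrt (2 * π) * σ)⁻¹) ^ d with hCd
  have hCd0 : 0 < Cd := by
    rw [hCd]
    have h2π : (0:ℝ) < Real.sqrt (2 * π) := Real.sqrt_pos.2 (by positivity)
    positivity
  have hint : Integrable
      (fun x : E ↦ (Cd * (1 + ‖c‖)) * ((1 + ‖x‖) * rexp (-‖x - θ0‖ ^ 2 / (2 * σ ^ 2)))) :=
    (integrable_gauss_poly hσ θ0).const_mul _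
  refine hint.mono' ?_ (Filter.Eventually.of_forall fun x ↦ ?_)
  · exact (((continuous_gaussDensity σ θ0).mul hw).smul
      ((continuous_const (y := c)).sub continuous_id)).aestronglyMeasurable
  · rw [norm_smul, Real.norm_eq_abs, abs_mul]
    have h1 : |gaussDensity σ θ0 x| = Cd * gg σ θ0 x := by
      rw [abs_of_pos (gaussDensity_pos hσ θ0 x), gaussDensity_eq]
    rw [h1]
    have hnc : ‖(c - x : E)‖ ≤ (1 + ‖c‖) * (1 + ‖x‖) := by
      have : ‖(c - x : E)‖ ≤ ‖c‖ + ‖x‖ := norm_sub_le _ _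
      nlinarith [norm_nonneg (c : E), norm_nonneg (x : E)]
    calc Cd * gg σ θ0 x * |w x| * ‖(c - x : E)‖
        ≤ Cd * gg σ θ0 x * 1 * ((1 + ‖c‖) * (1 + ‖x‖)) := by
          have hnn : (0:ℝ) ≤ Cd * gg σ θ0 x := mul_nonneg hCd0.le (gg_pos σ θ0 x).le
          apply mul_le_mul (by
            apply mul_le_mul_of_nonneg_left (hb x) hnn) hnc (norm_nonneg _)
          nlinarith
      _ = Cd * (1 + ‖c‖) * ((1 + ‖x‖) * gg σ θ0 x) := by ring
      _ = _ := rfl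

/-! ### The derivative -/

lemma hasFDerivAt_gg {σ : ℝ} (hσ : σ ≠ 0) (μ x : E) :
    HasFDerivAt (gg σ μ) ((gg σ μ x * (σ ^ 2)⁻¹) • innerSL ℝ (μ - x)) x := by
  have h1 : HasFDerivAt (fun y : E ↦ ‖y - μ‖ ^ 2)
      (2 • (innerSL ℝ (x - μ)).comp (ContinuousLinearMap.id ℝ _)) x :=
    ((hasFDerivAt_id x).sub_const μ).norm_sq
  have h2 : HasFDerivAt (fun y : E ↦ (-(2 * σ ^ 2)⁻¹) * ‖y - μ‖ ^ 2)
      ((-(2 * σ ^ 2)⁻¹) • (2 • (innerSL ℝ (x - μ)).comp (ContinuousLinearMap.id ℝ _))) x :=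
    h1.const_mul _
  have h3 := h2.exp
  have e1 : (fun y : E ↦ Real.exp ((-(2 * σ ^ 2)⁻¹) * ‖y - μ‖ ^ 2)) = gg σ μ := by
    funext y; unfold gg; ring_nf
  rw [e1] at h3
  refine h3.congr_fderiv ?_
  ext v
  simp only [ContinuousLinearMap.smul_apply, ContinuousLinearMap.coe_smul', Pi.smul_apply,
    ContinuousLinearMap.comp_apply, ContinuousLinearMap.id_apply, innerSL_apply_apply, smul_eq_mul]
  have hms : (μ - x : E) = -(x - μ) := by abel
  rw [hms, inner_neg_left]
  have e2 : Real.exp ((-(2 * σ ^ 2)⁻¹) * ‖x - μ‖ ^ 2) = gg σ μ x := by unfold gg; ring_nf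
  rw [e2]
  have : (σ:ℝ)^2 ≠ 0 := pow_ne_zero _ hσ
  field_simp; ring

lemma hasLineDerivAt_F {σ : ℝ} (hσ : 0 < σ) (θ0 : E) (β : Fin k → E) (i : Fin k) (x v : E) :
    HasLineDerivAt ℝ (fun y ↦ gaussDensity σ θ0 y * assocCoef σ β i y)
      ((gaussDensity σ θ0 x * assocCoef σ β i x) *
        ((inner ℝ (θ0 - x) v : ℝ) + (inner ℝ (β i - x) v : ℝ)
          - ∑ ℓ, assocCoef σ β ℓ x * (inner ℝ (β ℓ - x) v : ℝ)) / σ ^ 2) x v := by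
  have : Nonempty (Fin k) := ⟨i⟩
  have hσ' : σ ≠ 0 := hσ.ne'
  have hS0 : SS σ β x ≠ 0 := (SS_pos σ β x).ne'
  set Cd : ℝ := ((Real.sqrt (2 * π) * σ)⁻¹) ^ d with hCd
  have hθ := hasFDerivAt_gg hσ' θ0 x
  have hi := hasFDerivAt_gg hσ' (β i) x
  have hS : HasFDerivAt (SS σ β)
      (∑ ℓ, (gg σ (β ℓ) x * (σ ^ 2)⁻¹) • innerSL ℝ (β ℓ - x)) x := by
    unfold SS
    exact HasFDerivAt.fun_sum fun ℓ _ ↦ hasFDerivAt_gg hσ' (β ℓ) x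
  have hinv : HasFDerivAt (fun y ↦ (SS σ β y)⁻¹)
      ((-((SS σ β x) ^ 2)⁻¹) • (∑ ℓ, (gg σ (β ℓ) x * (σ ^ 2)⁻¹) • innerSL ℝ (β ℓ - x))) x := by
    have := (hasDerivAt_inv hS0).comp_hasFDerivAt x hS
    refine this.congr_fderiv ?_
    simp
  have hF := (((hθ.fun_mul hi).fun_mul hinv).const_mul Cd)
  have efun : (fun y ↦ Cd * (gg σ θ0 y * gg σ (β i) y * (SS σ β y)⁻¹))
      = (fun y ↦ gaussDensity σ θ0 y * assocCoef σ β i y) := by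
    funext y
    rw [gaussDensity_eq, assocCoef_eq]
    ring
  rw [efun] at hF
  refine (hF.hasLineDerivAt v).congr_deriv ?_
  simp only [ContinuousLinearMap.smul_apply, ContinuousLinearMap.add_apply,
    ContinuousLinearMap.coe_smul', Pi.smul_apply, ContinuousLinearMap.sum_apply,
    innerSL_apply_apply, smul_eq_mul, ContinuousLinearMap.coe_sum', Finset.sum_apply,
    Pi.neg_apply, ContinuousLinearMap.neg_apply]
  rw [gaussDensity_eq]
  simp only [assocCoef_eq]
  have e1 : ∑ ℓ, gg σ (β ℓ) x / SS σ β x * (inner ℝ (β ℓ - x) v : ℝ)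
      = (∑ ℓ, gg σ (β ℓ) x * (inner ℝ (β ℓ - x) v : ℝ)) / SS σ β x := by
    rw [Finset.sum_div]
    exact Finset.sum_congr rfl fun ℓ _ ↦ (div_mul_eq_mul_div _ _ _)
  have e2 : ∑ ℓ, gg σ (β ℓ) x * (σ ^ 2)⁻¹ * (inner ℝ (β ℓ - x) v : ℝ)
      = (σ ^ 2)⁻¹ * ∑ ℓ, gg σ (β ℓ) x * (inner ℝ (β ℓ - x) v : ℝ) := by
    rw [Finset.mul_sum]
    exact Finset.sum_congr rfl fun ℓ _ ↦ by ring
  rw [e1, e2]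
  have hσ2 : (σ:ℝ) ^ 2 ≠ 0 := pow_ne_zero _ hσ'
  rw [← hCd]
  clear_value Cd
  set a := (inner ℝ (θ0 - x) v : ℝ) with ha
  set bb := (inner ℝ (β i - x) v : ℝ) with hbb
  set A := ∑ ℓ, gg σ (β ℓ) x * (inner ℝ (β ℓ - x) v : ℝ) with hA
  set G0 := gg σ θ0 x with hG0
  set Gi := gg σ (β i) x with hGi
  set S := SS σ β x with hS'
  clear_value a bb A G0 Gi S
  field_simp
  ring

/-! ### Vanishing integral of the derivative (Stein-type identity) -/

lemma integrable_F {σ : ℝ} (hσ : 0 < σ) (θ0 : E) (β : Fin k → E) (i : Fin k) :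
    Integrable (fun x : E ↦ gaussDensity σ θ0 x * assocCoef σ β i x) := by
  have : Nonempty (Fin k) := ⟨i⟩
  refine integrable_gd_mul hσ θ0 (continuous_assocCoef σ β i) (M := 1) fun x ↦ ?_
  have := abs_assocCoef_le_one σ β i x
  nlinarith [norm_nonneg (x : E), abs_nonneg (assocCoef σ β i x)]

lemma integrable_F_mul {σ : ℝ} (hσ : 0 < σ) (θ0 : E) (β : Fin k → E) (i j : Fin k) :
    Integrable (fun x : E ↦ gaussDensity σ θ0 x * (assocCoef σ β i x * assocCoef σ β j x)) := by
  have : Nonempty (Fin k) := ⟨i⟩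
  refine integrable_gd_mul hσ θ0
    ((continuous_assocCoef σ β i).mul (continuous_assocCoef σ β j)) (M := 1) fun x ↦ ?_
  rw [abs_mul]
  have h1 := abs_assocCoef_le_one σ β i x
  have h2 := abs_assocCoef_le_one σ β j x
  nlinarith [norm_nonneg (x : E), abs_nonneg (assocCoef σ β i x), abs_nonneg (assocCoef σ β j x)]

lemma inner_bound (c x v : E) :
    |(inner ℝ (c - x) v : ℝ)| ≤ ((1 + ‖c‖) * ‖v‖) * (1 + ‖x‖) := by
  calc |(inner ℝ (c - x) v : ℝ)| ≤ ‖(c - x : E)‖ * ‖v‖ := abs_real_inner_le_norm _ _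
    _ ≤ (‖c‖ + ‖x‖) * ‖v‖ := mul_le_mul_of_nonneg_right (norm_sub_le _ _) (norm_nonneg _)
    _ ≤ ((1 + ‖c‖) * ‖v‖) * (1 + ‖x‖) := by
        nlinarith [norm_nonneg (c : E), norm_nonneg (x : E), norm_nonneg (v : E),
          mul_nonneg (mul_nonneg (norm_nonneg (c : E)) (norm_nonneg (x : E))) (norm_nonneg (v : E))]

lemma integrable_F' {σ : ℝ} (hσ : 0 < σ) (θ0 : E) (β : Fin k → E) (i : Fin k) (v : E) :
    Integrable (fun x : E ↦ (gaussDensity σ θ0 x * assocCoef σ β i x) *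
      ((inner ℝ (θ0 - x) v : ℝ) + (inner ℝ (β i - x) v : ℝ)
        - ∑ ℓ, assocCoef σ β ℓ x * (inner ℝ (β ℓ - x) v : ℝ)) / σ ^ 2) := by
  have : Nonempty (Fin k) := ⟨i⟩
  set T : ℝ := (1 + ‖θ0‖) * ‖v‖ + (1 + ‖β i‖) * ‖v‖ + ∑ ℓ, (1 + ‖β ℓ‖) * ‖v‖ with hT
  have hmain : Integrable (fun x : E ↦ gaussDensity σ θ0 x * (assocCoef σ β i x *
      ((inner ℝ (θ0 - x) v : ℝ) + (inner ℝ (β i - x) v : ℝ)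
        - ∑ ℓ, assocCoef σ β ℓ x * (inner ℝ (β ℓ - x) v : ℝ)) / σ ^ 2)) := by
    refine integrable_gd_mul hσ θ0 ?_ (M := T / σ ^ 2) fun x ↦ ?_
    · apply Continuous.div_const
      apply (continuous_assocCoef σ β i).mul
      apply Continuous.sub (Continuous.add ?_ ?_) ?_
      · exact (continuous_const.sub continuous_id).inner continuous_const
      · exact (continuous_const.sub continuous_id).inner continuous_const
      · exact continuous_finset_sum _ fun ℓ _ ↦ (continuous_assocCoef σ β ℓ).mul
          ((continuous_const.sub continuous_id).inner continuous_const)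
    · have hψ := abs_assocCoef_le_one σ β i x
      have hA : |(inner ℝ (θ0 - x) v : ℝ) + (inner ℝ (β i - x) v : ℝ)
          - ∑ ℓ, assocCoef σ β ℓ x * (inner ℝ (β ℓ - x) v : ℝ)| ≤ T * (1 + ‖x‖) := by
        have h1 := inner_bound θ0 x v
        have h2 := inner_bound (β i) x v
        have h3 : |∑ ℓ, assocCoef σ β ℓ x * (inner ℝ (β ℓ - x) v : ℝ)|
            ≤ ∑ ℓ, ((1 + ‖β ℓ‖) * ‖v‖) * (1 + ‖x‖) := by
          refine (Finset.abs_sum_le_sum_abs _ _).trans (Finset.sum_le_sum fun ℓ _ ↦ ?_)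
          rw [abs_mul]
          calc |assocCoef σ β ℓ x| * |(inner ℝ (β ℓ - x) v : ℝ)|
              ≤ 1 * (((1 + ‖β ℓ‖) * ‖v‖) * (1 + ‖x‖)) :=
                mul_le_mul (abs_assocCoef_le_one σ β ℓ x) (inner_bound (β ℓ) x v)
                  (abs_nonneg _) zero_le_one
            _ = _ := one_mul _
        calc |(inner ℝ (θ0 - x) v : ℝ) + (inner ℝ (β i - x) v : ℝ)
            - ∑ ℓ, assocCoef σ β ℓ x * (inner ℝ (β ℓ - x) v : ℝ)|
            ≤ |(inner ℝ (θ0 - x) v : ℝ) + (inner ℝ (β i - x) v : ℝ)|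
              + |∑ ℓ, assocCoef σ β ℓ x * (inner ℝ (β ℓ - x) v : ℝ)| := abs_sub _ _
          _ ≤ (|(inner ℝ (θ0 - x) v : ℝ)| + |(inner ℝ (β i - x) v : ℝ)|)
              + |∑ ℓ, assocCoef σ β ℓ x * (inner ℝ (β ℓ - x) v : ℝ)| := by
                have := abs_add_le (inner ℝ (θ0 - x) v : ℝ) (inner ℝ (β i - x) v : ℝ)
                linarith
          _ ≤ (((1 + ‖θ0‖) * ‖v‖) * (1 + ‖x‖) + ((1 + ‖β i‖) * ‖v‖) * (1 + ‖x‖))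
              + ∑ ℓ, ((1 + ‖β ℓ‖) * ‖v‖) * (1 + ‖x‖) := by linarith
          _ = T * (1 + ‖x‖) := by rw [hT, ← Finset.sum_mul]; ring
      rw [abs_div, abs_mul]
      have hx1 : (0:ℝ) < 1 + ‖x‖ := by positivity
      have habs : |assocCoef σ β i x| * |(inner ℝ (θ0 - x) v : ℝ) + (inner ℝ (β i - x) v : ℝ)
          - ∑ ℓ, assocCoef σ β ℓ x * (inner ℝ (β ℓ - x) v : ℝ)| ≤ T * (1 + ‖x‖) := by
        calc |assocCoef σ β i x| * _ ≤ 1 * (T * (1 + ‖x‖)) :=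
            mul_le_mul hψ hA (abs_nonneg _) zero_le_one
          _ = T * (1 + ‖x‖) := one_mul _
      rw [abs_of_pos (by positivity : (0:ℝ) < σ ^ 2)]
      rw [div_le_iff₀ (by positivity : (0:ℝ) < σ ^ 2)]
      calc |assocCoef σ β i x| * |_| ≤ T * (1 + ‖x‖) := habs
        _ = T / σ ^ 2 * (1 + ‖x‖) * σ ^ 2 := by field_simp
  refine hmain.congr (Filter.Eventually.of_forall fun x ↦ ?_)
  ring

lemma integral_lineDeriv_zero {σ : ℝ} (hσ : 0 < σ) (θ0 : E) (β : Fin k → E) (i : Fin k)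
    (v : E) :
    ∫ x : E, (gaussDensity σ θ0 x * assocCoef σ β i x) *
      ((inner ℝ (θ0 - x) v : ℝ) + (inner ℝ (β i - x) v : ℝ)
        - ∑ ℓ, assocCoef σ β ℓ x * (inner ℝ (β ℓ - x) v : ℝ)) / σ ^ 2 = 0 := by
  have : Nonempty (Fin k) := ⟨i⟩
  set F : E → ℝ := fun x ↦ gaussDensity σ θ0 x * assocCoef σ β i x with hF
  set F' : E → ℝ := fun x ↦ (gaussDensity σ θ0 x * assocCoef σ β i x) *
      ((inner ℝ (θ0 - x) v : ℝ) + (inner ℝ (β i - x) v : ℝ)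
        - ∑ ℓ, assocCoef σ β ℓ x * (inner ℝ (β ℓ - x) v : ℝ)) / σ ^ 2 with hF'
  have h := integral_bilinear_hasLineDerivAt_right_eq_neg_left_of_integrable
    (μ := (volume : Measure (EuclideanSpace ℝ (Fin d))))
    (B := ContinuousLinearMap.mul ℝ ℝ) (f := F) (f' := F')
    (g := fun _ ↦ (1:ℝ)) (g' := fun _ ↦ (0:ℝ)) (v := v)
    ?_ ?_ ?_ ?_ ?_
  · simpa using h.symm
  · simpa [ContinuousLinearMap.mul_apply'] using integrable_F' hσ θ0 β i v
  · simpa [ContinuousLinearMap.mul_apply'] using integrable_zero _ ℝ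
      (volume : Measure (EuclideanSpace ℝ (Fin d)))
  · simpa [ContinuousLinearMap.mul_apply'] using integrable_F hσ θ0 β i
  · intro x _
    exact hasLineDerivAt_F hσ θ0 β i x v
  · intro x _
    simpa using (hasFDerivAt_const (1:ℝ) x).hasLineDerivAt v

lemma stein {σ : ℝ} (hσ : 0 < σ) (θ0 : E) (β : Fin k → E) (i : Fin k) :
    ∫ x : E, (gaussDensity σ θ0 x * assocCoef σ β i x) • (β i - x)
      = (∑ ℓ, (∫ x : E, gaussDensity σ θ0 x * (assocCoef σ β i x * assocCoef σ β ℓ x)) • β ℓ)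
        - (∫ x : E, gaussDensity σ θ0 x * assocCoef σ β i x) • θ0 := by
  have : Nonempty (Fin k) := ⟨i⟩
  refine ext_inner_left ℝ fun v ↦ ?_
  have hIv : Integrable (fun x : E ↦ (gaussDensity σ θ0 x * assocCoef σ β i x) • (β i - x)) :=
    integrable_gd_smul hσ θ0 (β i) (continuous_assocCoef σ β i)
      (fun x ↦ abs_assocCoef_le_one σ β i x)
  rw [← integral_inner hIv v]
  have hlhs : ∀ x : E, (inner ℝ v ((gaussDensity σ θ0 x * assocCoef σ β i x) • (β i - x)) : ℝ)
      = (gaussDensity σ θ0 x * assocCoef σ β i x) * (inner ℝ (β i - x) v : ℝ) := by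
    intro x
    rw [real_inner_smul_right, real_inner_comm]
  simp only [hlhs]
  -- right-hand side
  rw [inner_sub_right, inner_sum]
  simp only [real_inner_smul_right]
  have hR1 : ∀ ℓ : Fin k, (∫ x : E, gaussDensity σ θ0 x *
        (assocCoef σ β i x * assocCoef σ β ℓ x)) * (inner ℝ v (β ℓ) : ℝ)
      = ∫ x : E, gaussDensity σ θ0 x *
        (assocCoef σ β i x * assocCoef σ β ℓ x) * (inner ℝ v (β ℓ) : ℝ) :=
    fun ℓ ↦ (integral_mul_const _ _).symm
  simp only [hR1]
  rw [← integral_finset_sum _ (fun ℓ _ ↦ (integrable_F_mul hσ θ0 β i ℓ).mul_const _)]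
  rw [← integral_mul_const]
  rw [← integral_sub (integrable_finset_sum _
    (fun ℓ _ ↦ (integrable_F_mul hσ θ0 β i ℓ).mul_const _))
    ((integrable_F hσ θ0 β i).mul_const _)]
  have hzero := integral_lineDeriv_zero hσ θ0 β i v
  have hptw : ∀ x : E, (gaussDensity σ θ0 x * assocCoef σ β i x) * (inner ℝ (β i - x) v : ℝ)
      = (∑ ℓ, gaussDensity σ θ0 x * (assocCoef σ β i x * assocCoef σ β ℓ x)
          * (inner ℝ v (β ℓ) : ℝ))
        - gaussDensity σ θ0 x * assocCoef σ β i x * (inner ℝ v θ0 : ℝ)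
        + σ ^ 2 * ((gaussDensity σ θ0 x * assocCoef σ β i x) *
          ((inner ℝ (θ0 - x) v : ℝ) + (inner ℝ (β i - x) v : ℝ)
            - ∑ ℓ, assocCoef σ β ℓ x * (inner ℝ (β ℓ - x) v : ℝ)) / σ ^ 2) := by
    intro x
    have hσ2 : (σ:ℝ) ^ 2 ≠ 0 := pow_ne_zero _ hσ.ne'
    have hsum1 : ∑ ℓ, assocCoef σ β ℓ x = 1 := sum_assocCoef σ β x
    have e1 : ∑ ℓ, gaussDensity σ θ0 x * (assocCoef σ β i x * assocCoef σ β ℓ x)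
        * (inner ℝ v (β ℓ) : ℝ)
        = gaussDensity σ θ0 x * assocCoef σ β i x
          * ∑ ℓ, assocCoef σ β ℓ x * (inner ℝ v (β ℓ) : ℝ) := by
      rw [Finset.mul_sum]
      exact Finset.sum_congr rfl fun ℓ _ ↦ by ring
    have e2 : ∑ ℓ, assocCoef σ β ℓ x * (inner ℝ (β ℓ - x) v : ℝ)
        = (∑ ℓ, assocCoef σ β ℓ x * (inner ℝ v (β ℓ) : ℝ)) - (inner ℝ x v : ℝ) := by
      have : ∀ ℓ : Fin k, assocCoef σ β ℓ x * (inner ℝ (β ℓ - x) v : ℝ)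
          = assocCoef σ β ℓ x * (inner ℝ v (β ℓ) : ℝ) - assocCoef σ β ℓ x * (inner ℝ x v : ℝ) := by
        intro ℓ
        rw [inner_sub_left, real_inner_comm (β ℓ) v]
        ring
      simp only [this]
      rw [Finset.sum_sub_distrib, ← Finset.sum_mul, hsum1, one_mul]
    have e3 : (inner ℝ (θ0 - x) v : ℝ) = (inner ℝ v θ0 : ℝ) - (inner ℝ x v : ℝ) := by
      rw [inner_sub_left, real_inner_comm θ0 v]
    rw [e1, e2, e3]
    set F0 := gaussDensity σ θ0 x with hF0
    set ψ0 := assocCoef σ β i x with hψ0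
    set Sv := ∑ ℓ, assocCoef σ β ℓ x * (inner ℝ v (β ℓ) : ℝ) with hSv
    set aa := (inner ℝ v θ0 : ℝ) with haa
    set ix := (inner ℝ x v : ℝ) with hix
    set bi := (inner ℝ (β i - x) v : ℝ) with hbi
    clear_value F0 ψ0 Sv aa ix bi
    field_simp
    ring
  calc ∫ x : E, (gaussDensity σ θ0 x * assocCoef σ β i x) * (inner ℝ (β i - x) v : ℝ)
      = ∫ x : E, ((∑ ℓ, gaussDensity σ θ0 x * (assocCoef σ β i x * assocCoef σ β ℓ x)
            * (inner ℝ v (β ℓ) : ℝ))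
          - gaussDensity σ θ0 x * assocCoef σ β i x * (inner ℝ v θ0 : ℝ))
        + σ ^ 2 * ((gaussDensity σ θ0 x * assocCoef σ β i x) *
          ((inner ℝ (θ0 - x) v : ℝ) + (inner ℝ (β i - x) v : ℝ)
            - ∑ ℓ, assocCoef σ β ℓ x * (inner ℝ (β ℓ - x) v : ℝ)) / σ ^ 2) := by
        refine integral_congr_ae (Filter.Eventually.of_forall fun x ↦ ?_)
        dsimp only
        rw [hptw x]
    _ = (∫ x : E, (∑ ℓ, gaussDensity σ θ0 x * (assocCoef σ β i x * assocCoef σ β ℓ x)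
            * (inner ℝ v (β ℓ) : ℝ))
          - gaussDensity σ θ0 x * assocCoef σ β i x * (inner ℝ v θ0 : ℝ))
        + σ ^ 2 * ∫ x : E, (gaussDensity σ θ0 x * assocCoef σ β i x) *
          ((inner ℝ (θ0 - x) v : ℝ) + (inner ℝ (β i - x) v : ℝ)
            - ∑ ℓ, assocCoef σ β ℓ x * (inner ℝ (β ℓ - x) v : ℝ)) / σ ^ 2 := by
        rw [integral_add ?_ ?_, integral_const_mul]
        · exact (integrable_finset_sum _
            (fun ℓ _ ↦ (integrable_F_mul hσ θ0 β i ℓ).mul_const _)).sub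
            ((integrable_F hσ θ0 β i).mul_const _)
        · exact (integrable_F' hσ θ0 β i v).const_mul _
    _ = ∫ x : E, (∑ ℓ, gaussDensity σ θ0 x * (assocCoef σ β i x * assocCoef σ β ℓ x)
            * (inner ℝ v (β ℓ) : ℝ))
          - gaussDensity σ θ0 x * assocCoef σ β i x * (inner ℝ v θ0 : ℝ) := by
        rw [hzero, mul_zero, add_zero]

end Aux

/-- **Equivalent stationary condition** (Theorem 1): `β` is a stationary point of `L`
iff for all `i`, `∑_j β_j ∑_s E_s[Ψ_i Ψ_j] = ∑_s θ*_s E_s[Ψ_i]`. -/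
theorem equivalent_stationary_condition {d k ks : ℕ} (hk : 0 < k) (hks : 0 < ks)
    (σ : ℝ) (hσ : 0 < σ)
    (θ : Fin ks → EuclideanSpace ℝ (Fin d)) (β : Fin k → EuclideanSpace ℝ (Fin d)) :
    (∀ j : Fin k,
        ∫ x, (mixDensity σ θ x * assocCoef σ β j x) • (β j - x) = 0)
      ↔ (∀ i : Fin k,
        ∑ j : Fin k,
            (∑ s : Fin ks, ∫ x, gaussDensity σ (θ s) x * (assocCoef σ β i x * assocCoef σ β j x)) • β j
          = ∑ s : Fin ks, (∫ x, gaussDensity σ (θ s) x * assocCoef σ β i x) • θ s) := by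
  have hNe : Nonempty (Fin k) := ⟨⟨0, hk⟩⟩
  refine forall_congr' fun i ↦ ?_
  -- rewrite the integral on the left
  have hint : ∀ s : Fin ks, Integrable
      (fun x : EuclideanSpace ℝ (Fin d) ↦
        (gaussDensity σ (θ s) x * assocCoef σ β i x) • (β i - x)) :=
    fun s ↦ integrable_gd_smul hσ (θ s) (β i) (continuous_assocCoef σ β i)
      (fun x ↦ abs_assocCoef_le_one σ β i x)
  have hmix : (∫ x, (mixDensity σ θ x * assocCoef σ β i x) • (β i - x))
      = (ks : ℝ)⁻¹ • ∑ s : Fin ks,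
          ∫ x, (gaussDensity σ (θ s) x * assocCoef σ β i x) • (β i - x) := by
    rw [← integral_finset_sum _ (fun s _ ↦ hint s), ← integral_smul]
    refine integral_congr_ae (Filter.Eventually.of_forall fun x ↦ ?_)
    show (mixDensity σ θ x * assocCoef σ β i x) • (β i - x)
      = (ks : ℝ)⁻¹ • ∑ s : Fin ks, (gaussDensity σ (θ s) x * assocCoef σ β i x) • (β i - x)
    unfold mixDensity
    have e : (ks:ℝ)⁻¹ * (∑ s, gaussDensity σ (θ s) x) * assocCoef σ β i x
        = (ks:ℝ)⁻¹ * ∑ s, gaussDensity σ (θ s) x * assocCoef σ β i x := by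
      rw [mul_assoc, Finset.sum_mul]
    rw [e, mul_smul, Finset.sum_smul]
  rw [hmix]
  have hks0 : ((ks:ℝ)⁻¹ : ℝ) ≠ 0 := inv_ne_zero (Nat.cast_ne_zero.2 hks.ne')
  rw [smul_eq_zero_iff_right hks0]
  rw [Finset.sum_congr rfl fun s _ ↦ stein hσ (θ s) β i]
  rw [Finset.sum_sub_distrib, sub_eq_zero, Finset.sum_comm]
  simp only [← Finset.sum_smul]
end

section
/- Every stationary point β = (β_1,...,β_k) of the population negative log-likelihood L of a fitted Gaussian mixture satisfies β_i ∈ span{θ*_1,...,θ*_{k*}} for every i ∈ [k], where θ*_s are the true component centers. -/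
open MeasureTheory Real Filter
open scoped RealInnerProductSpace

set_option maxHeartbeats 1000000

lemma hasDerivAt_qline {d : ℕ} {σ : ℝ} (hσ : σ ≠ 0) (μ x v : EuclideanSpace ℝ (Fin d)) (t : ℝ) :
    HasDerivAt (fun s : ℝ => Real.exp (-‖x + s • v - μ‖ ^ 2 / (2 * σ ^ 2)))
      (Real.exp (-‖x + t • v - μ‖ ^ 2 / (2 * σ ^ 2)) * (-⟪x + t • v - μ, v⟫ / σ ^ 2)) t := by
  have hc : HasDerivAt (fun s : ℝ => x + s • v - μ) v t := by
    simpa using (((hasDerivAt_id t).smul_const v).const_add x).sub_const μ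
  have hi : HasDerivAt (fun s : ℝ => ⟪x + s • v - μ, x + s • v - μ⟫)
      (2 * ⟪x + t • v - μ, v⟫) t := by
    have h := hc.inner ℝ hc
    have e : ⟪x + t • v - μ, v⟫ + ⟪v, x + t • v - μ⟫ = 2 * ⟪x + t • v - μ, v⟫ := by
      rw [real_inner_comm]; ring
    rw [← e]; exact h
  have h2 : HasDerivAt (fun s : ℝ => -⟪x + s • v - μ, x + s • v - μ⟫ / (2 * σ ^ 2))
      (-(2 * ⟪x + t • v - μ, v⟫) / (2 * σ ^ 2)) t := hi.neg.div_const _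
  have h3 := h2.exp
  have hnorm : ∀ s : ℝ, -‖x + s • v - μ‖ ^ 2 / (2 * σ ^ 2)
      = -⟪x + s • v - μ, x + s • v - μ⟫ / (2 * σ ^ 2) := by
    intro s; rw [real_inner_self_eq_norm_sq]
  simp_rw [hnorm]
  convert h3 using 1
  field_simp

lemma integrable_rexp_gauss {d : ℕ} {b : ℝ} (hb : 0 < b) (μ : EuclideanSpace ℝ (Fin d)) :
    Integrable (fun x : EuclideanSpace ℝ (Fin d) => rexp (-b * ‖x - μ‖ ^ 2)) := by
  have h0 := (GaussianFourier.integrable_cexp_neg_mul_sq_norm_add (V := EuclideanSpace ℝ (Fin d))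
    (b := (b : ℂ)) (by simpa using hb) ((2 * b : ℝ) : ℂ) μ).norm
  have : Integrable (fun x : EuclideanSpace ℝ (Fin d) =>
      rexp (-b * ‖x‖ ^ 2 + 2 * b * ⟪μ, x⟫)) := by
    have heq : ∀ x : EuclideanSpace ℝ (Fin d),
        ‖Complex.exp (-(b:ℂ) * (‖x‖:ℂ) ^ 2 + ((2 * b : ℝ):ℂ) * ((⟪μ, x⟫ : ℝ):ℂ))‖
          = rexp (-b * ‖x‖ ^ 2 + 2 * b * ⟪μ, x⟫) := by
      intro x
      rw [show (-(b:ℂ) * (‖x‖:ℂ) ^ 2 + ((2 * b : ℝ):ℂ) * ((⟪μ, x⟫ : ℝ):ℂ))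
          = ((-b * ‖x‖ ^ 2 + 2 * b * ⟪μ, x⟫ : ℝ) : ℂ) by push_cast; ring]
      rw [Complex.norm_exp, Complex.ofReal_re]
    simp only [heq] at h0
    exact h0
  have heq : ∀ x : EuclideanSpace ℝ (Fin d),
      rexp (-b * ‖x - μ‖ ^ 2) = rexp (-b * ‖μ‖ ^ 2) * rexp (-b * ‖x‖ ^ 2 + 2 * b * ⟪μ, x⟫) := by
    intro x
    rw [← Real.exp_add, @norm_sub_sq_real, real_inner_comm μ x]
    ring_nf
  simp_rw [heq]
  exact this.const_mul _

lemma integrable_q_mul_aux {d : ℕ} {c : ℝ} (hc : 0 < c) (μ : EuclideanSpace ℝ (Fin d))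
    {C : ℝ} (hC : 0 ≤ C) :
    Integrable (fun x : EuclideanSpace ℝ (Fin d) => rexp (-‖x - μ‖ ^ 2 / c) * (C + ‖x‖)) := by
  set A : ℝ := C + ‖μ‖ + 1 + 2 * c with hA
  have hbase := integrable_rexp_gauss (b := 1 / (2 * c)) (by positivity) μ
  apply Integrable.mono' (hbase.const_mul A)
  · apply Continuous.aestronglyMeasurable
    have h1 : Continuous fun x : EuclideanSpace ℝ (Fin d) => -‖x - μ‖ ^ 2 / c := by
      fun_prop
    exact (h1.rexp).mul (continuous_const.add continuous_norm)
  · refine Filter.Eventually.of_forall fun x => ?_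
    set r : ℝ := ‖x - μ‖ with hr
    have hr0 : 0 ≤ r := norm_nonneg _
    have hxle : ‖x‖ ≤ ‖μ‖ + r := by
      calc ‖x‖ = ‖μ + (x - μ)‖ := by rw [add_sub_cancel]
      _ ≤ ‖μ‖ + r := norm_add_le _ _
    set u : ℝ := 1 / (2 * c) * r ^ 2 with hu
    have hu0 : 0 ≤ u := by positivity
    have hsplit : rexp (-r ^ 2 / c) = rexp (-u) * rexp (-u) := by
      rw [← Real.exp_add]; congr 1; rw [hu]; field_simp; ring
    have e1 : (1 : ℝ) + u ≤ rexp u := by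
      have := Real.add_one_le_exp u; linarith
    have e2 : C + ‖μ‖ + r ≤ A * (1 + u) := by
      have huc : u * (2 * c) = r ^ 2 := by rw [hu]; field_simp
      nlinarith [sq_nonneg (r - 1), mul_nonneg hu0 hc.le, mul_nonneg (mul_nonneg hC hu0) hc.le,
        mul_nonneg (mul_nonneg (norm_nonneg μ) hu0) hc.le]
    have e3 : (C + ‖μ‖ + r) * rexp (-u) ≤ A := by
      have hA0 : 0 ≤ A := by positivity
      have : C + ‖μ‖ + r ≤ A * rexp u := le_trans e2 (by nlinarith [Real.exp_pos u])
      calc (C + ‖μ‖ + r) * rexp (-u) ≤ A * rexp u * rexp (-u) :=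
            mul_le_mul_of_nonneg_right this (Real.exp_pos _).le
      _ = A := by rw [mul_assoc, ← Real.exp_add]; simp
    have hnn : 0 ≤ rexp (-r ^ 2 / c) * (C + ‖x‖) := by positivity
    rw [Real.norm_of_nonneg hnn]
    calc rexp (-r ^ 2 / c) * (C + ‖x‖) ≤ rexp (-r ^ 2 / c) * (C + ‖μ‖ + r) := by
          apply mul_le_mul_of_nonneg_left (by linarith) (Real.exp_pos _).le
    _ = ((C + ‖μ‖ + r) * rexp (-u)) * rexp (-u) := by rw [hsplit]; ring
    _ ≤ A * rexp (-u) := mul_le_mul_of_nonneg_right e3 (Real.exp_pos _).le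
    _ = A * rexp (-(1 / (2 * c)) * ‖x - μ‖ ^ 2) := by rw [hu, hr]; ring_nf

lemma integral_linederiv_eq_zero {d : ℕ} (F F' : EuclideanSpace ℝ (Fin d) → ℝ)
    (v : EuclideanSpace ℝ (Fin d))
    (hFc : Continuous F) (hFi : Integrable F) (hF'c : Continuous F')
    (bound : EuclideanSpace ℝ (Fin d) → ℝ) (hbi : Integrable bound)
    (hb : ∀ x : EuclideanSpace ℝ (Fin d), ∀ t ∈ Metric.ball (0:ℝ) 1, |F' (x + t • v)| ≤ bound x)
    (hd : ∀ (x : EuclideanSpace ℝ (Fin d)) (t : ℝ),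
      HasDerivAt (fun s : ℝ => F (x + s • v)) (F' (x + t • v)) t) :
    ∫ x, F' x = 0 := by
  have key := hasDerivAt_integral_of_dominated_loc_of_deriv_le
    (μ := (volume : Measure (EuclideanSpace ℝ (Fin d))))
    (F := fun (t : ℝ) (x : EuclideanSpace ℝ (Fin d)) => F (x + t • v))
    (F' := fun (t : ℝ) (x : EuclideanSpace ℝ (Fin d)) => F' (x + t • v))
    (x₀ := 0) (s := Metric.ball 0 1) (bound := bound) (Metric.ball_mem_nhds 0 one_pos)
    (Filter.Eventually.of_forall fun t =>
      (hFc.comp (continuous_id.add continuous_const)).aestronglyMeasurable)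
    (by simpa using hFi)
    ((hF'c.comp (by continuity)).aestronglyMeasurable)
    (Filter.Eventually.of_forall fun x => fun t ht => by
      rw [Real.norm_eq_abs]; exact hb x t ht)
    hbi
    (Filter.Eventually.of_forall fun x => fun t _ => hd x t)
  obtain ⟨-, hderiv⟩ := key
  have hconst : (fun t : ℝ => ∫ x, F (x + t • v)) = fun _ : ℝ => ∫ x, F x := by
    funext t
    exact integral_add_right_eq_self F (t • v)
  rw [hconst] at hderiv
  have h0 : HasDerivAt (fun _ : ℝ => ∫ x, F x) 0 0 := hasDerivAt_const _ _
  have := h0.unique hderiv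
  simpa using this.symm

lemma maxcoef_nonpos {d k : ℕ} (hk : 0 < k) {σ : ℝ} (hσ : 0 < σ)
    (β : Fin k → EuclideanSpace ℝ (Fin d)) (v : EuclideanSpace ℝ (Fin d))
    (h : ∀ x : EuclideanSpace ℝ (Fin d),
      ∑ ℓ, ⟪β ℓ, v⟫ * rexp (-‖x - β ℓ‖ ^ 2 / (2 * σ ^ 2)) = 0)
    (i : Fin k) : ⟪β i, v⟫ ≤ 0 := by
  haveI : Nonempty (Fin k) := ⟨⟨0, hk⟩⟩
  set m : Fin k → ℝ := fun ℓ => ⟪β ℓ, v⟫ with hm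
  obtain ⟨j, -, hj⟩ := Finset.exists_max_image Finset.univ m ⟨i, Finset.mem_univ i⟩
  have hji : m i ≤ m j := hj i (Finset.mem_univ i)
  suffices hmj : m j ≤ 0 by exact le_trans hji hmj
  by_contra hpos
  push_neg at hpos
  have hσ2 : (0:ℝ) < 2 * σ ^ 2 := by positivity
  -- plug x = t • v and renormalize
  have key : ∀ t : ℝ,
      ∑ ℓ, m ℓ * rexp ((2 * t * (m ℓ - m j) - ‖β ℓ‖ ^ 2) / (2 * σ ^ 2)) = 0 := by
    intro t
    have h1 := h (t • v)
    have h2 : (∑ ℓ, m ℓ * rexp (-‖t • v - β ℓ‖ ^ 2 / (2 * σ ^ 2)))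
        * rexp ((t ^ 2 * ‖v‖ ^ 2 - 2 * t * m j) / (2 * σ ^ 2)) = 0 := by
      rw [h1, zero_mul]
    rw [Finset.sum_mul] at h2
    rw [← h2]
    apply Finset.sum_congr rfl
    intro ℓ _
    conv_rhs => rw [mul_assoc, ← Real.exp_add]
    congr 2
    have hnorm : ‖t • v - β ℓ‖ ^ 2 = t ^ 2 * ‖v‖ ^ 2 - 2 * t * m ℓ + ‖β ℓ‖ ^ 2 := by
      rw [@norm_sub_sq_real, norm_smul, real_inner_smul_left, real_inner_comm (β ℓ) v]
      simp only [hm, mul_pow, Real.norm_eq_abs, sq_abs]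
      ring
    rw [hnorm]
    field_simp
    ring
  -- limits as t → ∞
  set L : Fin k → ℝ := fun ℓ =>
    if m ℓ = m j then m ℓ * rexp (-‖β ℓ‖ ^ 2 / (2 * σ ^ 2)) else 0 with hL
  have hlim : Tendsto (fun t : ℝ =>
      ∑ ℓ, m ℓ * rexp ((2 * t * (m ℓ - m j) - ‖β ℓ‖ ^ 2) / (2 * σ ^ 2)))
      atTop (nhds (∑ ℓ, L ℓ)) := by
    apply tendsto_finset_sum
    intro ℓ _
    by_cases hcase : m ℓ = m j
    · have : (fun t : ℝ => m ℓ * rexp ((2 * t * (m ℓ - m j) - ‖β ℓ‖ ^ 2) / (2 * σ ^ 2)))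
          = fun _ : ℝ => L ℓ := by
        funext t
        rw [hL]
        simp only [hcase, sub_self, eq_self_iff_true, if_true]
        ring_nf
      rw [this]
      exact tendsto_const_nhds
    · have hneg : m ℓ - m j < 0 := sub_neg.mpr (lt_of_le_of_ne (hj ℓ (Finset.mem_univ ℓ)) hcase)
      have hin : Tendsto (fun t : ℝ => (2 * t * (m ℓ - m j) - ‖β ℓ‖ ^ 2) / (2 * σ ^ 2))
          atTop atBot := by
        apply Tendsto.atBot_div_const hσ2
        apply tendsto_atBot_add_const_right
        have h2' : Tendsto (fun t : ℝ => t * (2 * (m ℓ - m j))) atTop atBot :=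
          Tendsto.atTop_mul_const_of_neg (by linarith) tendsto_id
        convert h2' using 2 with t
        ring
      have : Tendsto (fun t : ℝ =>
          m ℓ * rexp ((2 * t * (m ℓ - m j) - ‖β ℓ‖ ^ 2) / (2 * σ ^ 2))) atTop (nhds (m ℓ * 0)) :=
        (Real.tendsto_exp_atBot.comp hin).const_mul _
      rw [hL]
      simp only [if_neg hcase]
      simpa using this
  have hzero : (∑ ℓ, L ℓ) = 0 := by
    have : Tendsto (fun _ : ℝ => (0:ℝ)) atTop (nhds (∑ ℓ, L ℓ)) := by
      simpa [key] using hlim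
    exact tendsto_nhds_unique this tendsto_const_nhds
  have hposL : 0 < ∑ ℓ, L ℓ := by
    apply Finset.sum_pos' 
    · intro ℓ _
      rw [hL]
      by_cases hcase : m ℓ = m j
      · simp only [if_pos hcase, hcase]
        exact le_of_lt (mul_pos hpos (Real.exp_pos _))
      · simp [hcase]
    · exact ⟨j, Finset.mem_univ j, by
        rw [hL]; simp only [if_pos rfl]; exact mul_pos hpos (Real.exp_pos _)⟩
  linarith

lemma hasDerivAt_wline {d k ks : ℕ} {σ : ℝ} (hσ : 0 < σ)
    (θ : Fin ks → EuclideanSpace ℝ (Fin d)) (β : Fin k → EuclideanSpace ℝ (Fin d))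
    (v : EuclideanSpace ℝ (Fin d)) (hθv : ∀ s, ⟪θ s, v⟫ = 0) (j : Fin k)
    (hk : 0 < k)
    (x : EuclideanSpace ℝ (Fin d)) (t : ℝ) :
    HasDerivAt (fun s : ℝ => (∑ u, rexp (-‖x + s • v - θ u‖ ^ 2 / (2 * σ ^ 2))) *
        (rexp (-‖x + s • v - β j‖ ^ 2 / (2 * σ ^ 2)) /
          ∑ ℓ, rexp (-‖x + s • v - β ℓ‖ ^ 2 / (2 * σ ^ 2))))
      ((∑ u, rexp (-‖(x + t • v) - θ u‖ ^ 2 / (2 * σ ^ 2))) *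
        (rexp (-‖(x + t • v) - β j‖ ^ 2 / (2 * σ ^ 2)) /
          ∑ ℓ, rexp (-‖(x + t • v) - β ℓ‖ ^ 2 / (2 * σ ^ 2))) *
        ((⟪β j, v⟫ - ⟪x + t • v, v⟫ -
          (∑ ℓ, ⟪β ℓ, v⟫ * rexp (-‖(x + t • v) - β ℓ‖ ^ 2 / (2 * σ ^ 2))) /
            (∑ ℓ, rexp (-‖(x + t • v) - β ℓ‖ ^ 2 / (2 * σ ^ 2)))) / σ ^ 2)) t := by
  have hσ2 : (σ:ℝ) ^ 2 ≠ 0 := pow_ne_zero _ hσ.ne'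
  set y : EuclideanSpace ℝ (Fin d) := x + t • v with hy
  have hqpos : ∀ μ : EuclideanSpace ℝ (Fin d), 0 < rexp (-‖y - μ‖ ^ 2 / (2 * σ ^ 2)) :=
    fun μ => Real.exp_pos _
  have hDpos : 0 < ∑ ℓ, rexp (-‖y - β ℓ‖ ^ 2 / (2 * σ ^ 2)) := by
    haveI : Nonempty (Fin k) := ⟨⟨0, hk⟩⟩
    exact Finset.sum_pos (fun ℓ _ => Real.exp_pos _) Finset.univ_nonempty
  -- derivative of the numerator Qθ
  have hQ : HasDerivAt (fun s : ℝ => ∑ u, rexp (-‖x + s • v - θ u‖ ^ 2 / (2 * σ ^ 2)))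
      ((∑ u, rexp (-‖y - θ u‖ ^ 2 / (2 * σ ^ 2))) * (-⟪y, v⟫ / σ ^ 2)) t := by
    have h := HasDerivAt.fun_sum (fun u (_ : u ∈ Finset.univ) => hasDerivAt_qline hσ.ne' (θ u) x v t)
    have e : ∑ u, rexp (-‖y - θ u‖ ^ 2 / (2 * σ ^ 2)) * (-⟪y - θ u, v⟫ / σ ^ 2)
        = (∑ u, rexp (-‖y - θ u‖ ^ 2 / (2 * σ ^ 2))) * (-⟪y, v⟫ / σ ^ 2) := by
      rw [Finset.sum_mul]
      refine Finset.sum_congr rfl fun u _ => ?_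
      rw [inner_sub_left, hθv u, sub_zero]
    rw [← e]
    exact h
  have hN : HasDerivAt (fun s : ℝ => rexp (-‖x + s • v - β j‖ ^ 2 / (2 * σ ^ 2)))
      (rexp (-‖y - β j‖ ^ 2 / (2 * σ ^ 2)) * (-(⟪y, v⟫ - ⟪β j, v⟫) / σ ^ 2)) t := by
    have h := hasDerivAt_qline hσ.ne' (β j) x v t
    rw [show ⟪y - β j, v⟫ = ⟪y, v⟫ - ⟪β j, v⟫ from inner_sub_left _ _ _] at h
    exact h
  have hDD : HasDerivAt (fun s : ℝ => ∑ ℓ, rexp (-‖x + s • v - β ℓ‖ ^ 2 / (2 * σ ^ 2)))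
      (((∑ ℓ, ⟪β ℓ, v⟫ * rexp (-‖y - β ℓ‖ ^ 2 / (2 * σ ^ 2)))
        - ⟪y, v⟫ * ∑ ℓ, rexp (-‖y - β ℓ‖ ^ 2 / (2 * σ ^ 2))) / σ ^ 2) t := by
    have h := HasDerivAt.fun_sum (fun ℓ (_ : ℓ ∈ Finset.univ) => hasDerivAt_qline hσ.ne' (β ℓ) x v t)
    have e : ∑ ℓ, rexp (-‖y - β ℓ‖ ^ 2 / (2 * σ ^ 2)) * (-⟪y - β ℓ, v⟫ / σ ^ 2)
        = ((∑ ℓ, ⟪β ℓ, v⟫ * rexp (-‖y - β ℓ‖ ^ 2 / (2 * σ ^ 2)))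
          - ⟪y, v⟫ * ∑ ℓ, rexp (-‖y - β ℓ‖ ^ 2 / (2 * σ ^ 2))) / σ ^ 2 := by
      symm
      rw [Finset.mul_sum, ← Finset.sum_sub_distrib, Finset.sum_div]
      refine Finset.sum_congr rfl fun ℓ _ => ?_
      rw [inner_sub_left]
      ring
    rw [← e]
    exact h
  have hfrac := hN.fun_div hDD hDpos.ne'
  have hw := hQ.fun_mul hfrac
  refine hw.congr_deriv ?_
  rw [← hy]
  generalize ∑ ℓ, rexp (-‖y - β ℓ‖ ^ 2 / (2 * σ ^ 2)) = D at hDpos ⊢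
  have hD0 := hDpos.ne'
  field_simp
  ring

/-- **Linear span** (Corollary): every stationary point of `L` lies in the span of the
true component centers. -/
theorem stationary_in_span {d k ks : ℕ} (hk : 0 < k) (hks : 0 < ks) (σ : ℝ) (hσ : 0 < σ)
    (θ : Fin ks → EuclideanSpace ℝ (Fin d)) (β : Fin k → EuclideanSpace ℝ (Fin d))
    (hstat : ∀ j : Fin k,
      ∫ x, (mixDensity σ θ x * assocCoef σ β j x) • (β j - x) = 0) :
    ∀ i : Fin k, β i ∈ Submodule.span ℝ (Set.range θ) := by
  intro i
  haveI : Nonempty (Fin k) := ⟨⟨0, hk⟩⟩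
  haveI : Nonempty (Fin ks) := ⟨⟨0, hks⟩⟩
  have hσ2 : (0:ℝ) < 2 * σ ^ 2 := by positivity
  suffices hkey : ∀ v : EuclideanSpace ℝ (Fin d),
      (∀ u ∈ Submodule.span ℝ (Set.range θ), ⟪u, v⟫ = 0) → ⟪β i, v⟫ = 0 by
    rw [← Submodule.orthogonal_orthogonal (Submodule.span ℝ (Set.range θ)),
      Submodule.mem_orthogonal]
    intro v hv
    rw [Submodule.mem_orthogonal] at hv
    rw [real_inner_comm]
    exact hkey v hv
  intro v hv
  have hθv : ∀ u, ⟪θ u, v⟫ = 0 := fun u => hv (θ u) (Submodule.subset_span ⟨u, rfl⟩)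
  -- Abbreviations (as plain functions)
  set Q : EuclideanSpace ℝ (Fin d) → ℝ :=
    fun x => ∑ u, rexp (-‖x - θ u‖ ^ 2 / (2 * σ ^ 2)) with hQdef
  set N : Fin k → EuclideanSpace ℝ (Fin d) → ℝ :=
    fun j x => rexp (-‖x - β j‖ ^ 2 / (2 * σ ^ 2)) with hNdef
  set D : EuclideanSpace ℝ (Fin d) → ℝ :=
    fun x => ∑ ℓ, rexp (-‖x - β ℓ‖ ^ 2 / (2 * σ ^ 2)) with hDdef
  set P : EuclideanSpace ℝ (Fin d) → ℝ :=
    fun x => ∑ ℓ, ⟪β ℓ, v⟫ * rexp (-‖x - β ℓ‖ ^ 2 / (2 * σ ^ 2)) with hPdef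
  -- positivity and bounds
  have hDpos : ∀ x, 0 < D x := fun x =>
    Finset.sum_pos (fun ℓ _ => Real.exp_pos _) Finset.univ_nonempty
  have hQpos : ∀ x, 0 < Q x := fun x =>
    Finset.sum_pos (fun u _ => Real.exp_pos _) Finset.univ_nonempty
  have hNpos : ∀ j x, 0 < N j x := fun j x => Real.exp_pos _
  have hNle : ∀ j x, N j x ≤ D x := fun j x =>
    Finset.single_le_sum (f := fun ℓ => rexp (-‖x - β ℓ‖ ^ 2 / (2 * σ ^ 2)))
      (fun ℓ _ => (Real.exp_pos _).le) (Finset.mem_univ j)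
  have hfrac0 : ∀ j x, 0 ≤ N j x / D x := fun j x =>
    div_nonneg (hNpos j x).le (hDpos x).le
  have hfrac1 : ∀ j x, N j x / D x ≤ 1 := fun j x =>
    (div_le_one (hDpos x)).2 (hNle j x)
  have hwnn : ∀ j x, 0 ≤ Q x * (N j x / D x) := fun j x =>
    mul_nonneg (hQpos x).le (hfrac0 j x)
  have hwle : ∀ j x, Q x * (N j x / D x) ≤ Q x := fun j x =>
    mul_le_of_le_one_right (hQpos x).le (hfrac1 j x)
  set M₀ : ℝ := ∑ ℓ, |⟪β ℓ, v⟫| with hM₀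
  have hM₀nn : 0 ≤ M₀ := Finset.sum_nonneg fun ℓ _ => abs_nonneg _
  have hPabs : ∀ x, |P x| ≤ M₀ * D x := by
    intro x
    calc |P x| ≤ ∑ ℓ, |⟪β ℓ, v⟫ * rexp (-‖x - β ℓ‖ ^ 2 / (2 * σ ^ 2))| :=
          Finset.abs_sum_le_sum_abs _ _
    _ ≤ ∑ ℓ, |⟪β ℓ, v⟫| * D x := by
        refine Finset.sum_le_sum fun ℓ _ => ?_
        rw [abs_mul, abs_of_pos (Real.exp_pos _)]
        exact mul_le_mul_of_nonneg_left (hNle ℓ x) (abs_nonneg _)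
    _ = M₀ * D x := by rw [← Finset.sum_mul]
  have hSabs : ∀ x, |P x / D x| ≤ M₀ := by
    intro x
    rw [abs_div, abs_of_pos (hDpos x), div_le_iff₀ (hDpos x)]
    exact hPabs x
  -- continuity
  have hcontq : ∀ μ : EuclideanSpace ℝ (Fin d),
      Continuous fun x : EuclideanSpace ℝ (Fin d) => rexp (-‖x - μ‖ ^ 2 / (2 * σ ^ 2)) := by
    intro μ
    apply Real.continuous_exp.comp
    exact (((continuous_id.sub continuous_const).norm.pow 2).neg).div_const _
  have hcontQ : Continuous Q := continuous_finset_sum _ fun u _ => hcontq (θ u)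
  have hcontD : Continuous D := continuous_finset_sum _ fun ℓ _ => hcontq (β ℓ)
  have hcontP : Continuous P :=
    continuous_finset_sum _ fun ℓ _ => continuous_const.mul (hcontq (β ℓ))
  have hcontw : ∀ j, Continuous fun x => Q x * (N j x / D x) := fun j =>
    hcontQ.mul ((hcontq (β j)).div hcontD fun x => (hDpos x).ne')
  have hcontS : Continuous fun x => P x / D x :=
    hcontP.div hcontD fun x => (hDpos x).ne'
  have hcontiv : Continuous fun x : EuclideanSpace ℝ (Fin d) => ⟪x, v⟫ :=
    continuous_id.inner continuous_const
  -- master integrability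
  have hQint : ∀ C : ℝ, 0 ≤ C → Integrable (fun x => Q x * (C + ‖x‖)) := by
    intro C hC
    have he : (fun x => Q x * (C + ‖x‖))
        = fun x => ∑ u, rexp (-‖x - θ u‖ ^ 2 / (2 * σ ^ 2)) * (C + ‖x‖) := by
      funext x; rw [hQdef, Finset.sum_mul]
    rw [he]
    exact integrable_finset_sum _ fun u _ => integrable_q_mul_aux hσ2 (θ u) hC
  have hQint' : Integrable Q := by
    have := hQint 1 zero_le_one
    apply this.mono' hcontQ.aestronglyMeasurable
    refine Filter.Eventually.of_forall fun x => ?_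
    rw [Real.norm_of_nonneg (hQpos x).le]
    nlinarith [hQpos x, norm_nonneg x]
  -- Step A : cleaned stationarity
  have hA : ∀ j, ∫ x, (Q x * (N j x / D x)) • (β j - x) = 0 := by
    intro j
    have h0 := hstat j
    set c₀ : ℝ := (ks : ℝ)⁻¹ * ((Real.sqrt (2 * π) * σ)⁻¹) ^ d with hc₀
    have hc₀pos : 0 < c₀ := by
      apply mul_pos (by positivity)
      apply pow_pos
      rw [inv_pos]
      exact mul_pos (Real.sqrt_pos.2 (by positivity)) hσ
    have hpt : ∀ x, (mixDensity σ θ x * assocCoef σ β j x) • (β j - x)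
        = c₀ • ((Q x * (N j x / D x)) • (β j - x)) := by
      intro x
      rw [smul_smul]
      congr 1
      simp only [mixDensity, gaussDensity, assocCoef, hQdef, hNdef, hDdef, hc₀]
      rw [← Finset.mul_sum]
      ring
    simp only [hpt] at h0
    rw [integral_smul] at h0
    rcases smul_eq_zero.1 h0 with h | h
    · exact absurd h hc₀pos.ne'
    · exact h
  -- integrability of the vector integrand
  have I1 : ∀ j, Integrable (fun x => (Q x * (N j x / D x)) • (β j - x)) := by
    intro j
    apply (hQint ‖β j‖ (norm_nonneg _)).mono'
      (((hcontw j).smul (continuous_const.sub continuous_id)).aestronglyMeasurable)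
    refine Filter.Eventually.of_forall fun x => ?_
    show ‖(Q x * (N j x / D x)) • (β j - x)‖ ≤ _
    rw [norm_smul, Real.norm_of_nonneg (hwnn j x)]
    calc (Q x * (N j x / D x)) * ‖β j - x‖ ≤ Q x * ‖β j - x‖ :=
          mul_le_mul_of_nonneg_right (hwle j x) (norm_nonneg _)
    _ ≤ Q x * (‖β j‖ + ‖x‖) :=
          mul_le_mul_of_nonneg_left (norm_sub_le _ _) (hQpos x).le
  -- Step C : scalar stationarity
  have hC : ∀ j, ∫ x, (Q x * (N j x / D x)) * (⟪β j, v⟫ - ⟪x, v⟫) = 0 := by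
    intro j
    have h2 := (ContinuousLinearMap.integral_comp_comm (innerSL ℝ v) (I1 j))
    rw [hA j, map_zero] at h2
    have hpt : ∀ x, (innerSL ℝ v) ((Q x * (N j x / D x)) • (β j - x))
        = (Q x * (N j x / D x)) * (⟪β j, v⟫ - ⟪x, v⟫) := by
      intro x
      simp only [innerSL_apply_apply]
      rw [real_inner_smul_right, inner_sub_right, real_inner_comm v (β j), real_inner_comm v x]
    simp only [hpt] at h2
    exact h2
  -- geometric helper
  have hgeom : ∀ a b : EuclideanSpace ℝ (Fin d), ‖a‖ ^ 2 / 2 - ‖b‖ ^ 2 ≤ ‖a + b‖ ^ 2 := by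
    intro a b
    have h := norm_add_le (a + b) (-b)
    simp only [add_neg_cancel_right, norm_neg] at h
    have h2 : ‖a‖ ^ 2 ≤ (‖a + b‖ + ‖b‖) ^ 2 := by
      nlinarith [norm_nonneg a, norm_nonneg (a + b), norm_nonneg b]
    nlinarith [h2, sq_nonneg (‖a + b‖ - ‖b‖)]
  have h4σ : (0:ℝ) < 4 * σ ^ 2 := by positivity
  have hwint : ∀ j, Integrable (fun x => Q x * (N j x / D x)) := by
    intro j
    apply hQint'.mono' (hcontw j).aestronglyMeasurable
    refine Filter.Eventually.of_forall fun x => ?_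
    rw [Real.norm_of_nonneg (hwnn j x)]
    exact hwle j x
  -- Step D : Stein identity
  have hStein : ∀ j, ∫ x, (Q x * (N j x / D x)) * ((⟪β j, v⟫ - ⟪x, v⟫ - P x / D x) / σ ^ 2)
      = 0 := by
    intro j
    have hcontF' : Continuous fun x =>
        (Q x * (N j x / D x)) * ((⟪β j, v⟫ - ⟪x, v⟫ - P x / D x) / σ ^ 2) :=
      (hcontw j).mul (((continuous_const.sub hcontiv).sub hcontS).div_const _)
    set A : ℝ := |⟪β j, v⟫| + M₀ with hA2
    have hAnn : 0 ≤ A := add_nonneg (abs_nonneg _) hM₀nn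
    set K : ℝ := rexp (‖v‖ ^ 2 / (2 * σ ^ 2)) * ((A + ‖v‖ + 1) / σ ^ 2) with hK
    have hbase : Integrable (fun x : EuclideanSpace ℝ (Fin d) =>
        (∑ u, rexp (-‖x - θ u‖ ^ 2 / (4 * σ ^ 2))) * ((1 + ‖v‖) + ‖x‖)) := by
      have he : (fun x : EuclideanSpace ℝ (Fin d) =>
          (∑ u, rexp (-‖x - θ u‖ ^ 2 / (4 * σ ^ 2))) * ((1 + ‖v‖) + ‖x‖))
          = fun x => ∑ u, rexp (-‖x - θ u‖ ^ 2 / (4 * σ ^ 2)) * ((1 + ‖v‖) + ‖x‖) := by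
        funext x; rw [Finset.sum_mul]
      rw [he]
      exact integrable_finset_sum _ fun u _ => integrable_q_mul_aux h4σ (θ u) (by positivity)
    apply integral_linederiv_eq_zero _ _ v (hcontw j) (hwint j) hcontF'
      (fun x => K * ((∑ u, rexp (-‖x - θ u‖ ^ 2 / (4 * σ ^ 2))) * ((1 + ‖v‖) + ‖x‖)))
      (hbase.const_mul K)
    · -- the bound
      intro x t ht
      have htabs : |t| ≤ 1 := by
        have := Metric.mem_ball.1 ht
        rw [Real.dist_eq, sub_zero] at this
        linarith
      have hz1 : ‖x + t • v‖ ≤ ‖x‖ + ‖v‖ := by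
        calc ‖x + t • v‖ ≤ ‖x‖ + ‖t • v‖ := norm_add_le _ _
        _ ≤ ‖x‖ + ‖v‖ := by
            rw [norm_smul, Real.norm_eq_abs]
            nlinarith [norm_nonneg v]
      have hE : |⟪β j, v⟫ - ⟪x + t • v, v⟫ - P (x + t • v) / D (x + t • v)|
          ≤ A + ‖v‖ * ‖x + t • v‖ := by
        have h1 : |⟪x + t • v, v⟫| ≤ ‖x + t • v‖ * ‖v‖ := abs_real_inner_le_norm _ _
        have h2 := hSabs (x + t • v)
        have h3 : |⟪β j, v⟫ - ⟪x + t • v, v⟫ - P (x + t • v) / D (x + t • v)|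
            ≤ |⟪β j, v⟫| + |⟪x + t • v, v⟫| + |P (x + t • v) / D (x + t • v)| := by
          calc _ ≤ |⟪β j, v⟫ - ⟪x + t • v, v⟫| + |P (x + t • v) / D (x + t • v)| :=
                abs_sub _ _
          _ ≤ (|⟪β j, v⟫| + |⟪x + t • v, v⟫|) + |P (x + t • v) / D (x + t • v)| := by
                gcongr
                exact abs_sub _ _
        rw [hA2]
        nlinarith [abs_nonneg (⟪β j, v⟫ : ℝ)]
      have hQb : Q (x + t • v)
          ≤ rexp (‖v‖ ^ 2 / (2 * σ ^ 2)) * ∑ u, rexp (-‖x - θ u‖ ^ 2 / (4 * σ ^ 2)) := by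
        rw [hQdef, Finset.mul_sum]
        refine Finset.sum_le_sum fun u _ => ?_
        rw [← Real.exp_add]
        apply Real.exp_le_exp.2
        have h1 := hgeom (x - θ u) (t • v)
        have h2 : (x - θ u) + t • v = (x + t • v) - θ u := by abel
        rw [h2] at h1
        have h3 : ‖t • v‖ ^ 2 ≤ ‖v‖ ^ 2 := by
          rw [norm_smul, Real.norm_eq_abs, mul_pow, sq_abs]
          have ht2 : t ^ 2 ≤ 1 := by nlinarith [htabs, sq_abs t, abs_nonneg t]
          nlinarith [ht2, sq_nonneg ‖v‖]
        have hnum : 0 ≤ 2 * ‖v‖ ^ 2 + 2 * ‖(x + t • v) - θ u‖ ^ 2 - ‖x - θ u‖ ^ 2 := by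
          nlinarith
        have hiden : ‖v‖ ^ 2 / (2 * σ ^ 2) + -‖x - θ u‖ ^ 2 / (4 * σ ^ 2)
            - (-‖(x + t • v) - θ u‖ ^ 2 / (2 * σ ^ 2))
            = (2 * ‖v‖ ^ 2 + 2 * ‖(x + t • v) - θ u‖ ^ 2 - ‖x - θ u‖ ^ 2) / (4 * σ ^ 2) := by
          field_simp
          ring
        have := div_nonneg hnum h4σ.le
        linarith [hiden ▸ this]
      calc |(Q (x + t • v) * (N j (x + t • v) / D (x + t • v))) *
              ((⟪β j, v⟫ - ⟪x + t • v, v⟫ - P (x + t • v) / D (x + t • v)) / σ ^ 2)|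
          = (Q (x + t • v) * (N j (x + t • v) / D (x + t • v))) *
              (|⟪β j, v⟫ - ⟪x + t • v, v⟫ - P (x + t • v) / D (x + t • v)| / σ ^ 2) := by
            rw [abs_mul, abs_of_nonneg (hwnn j _), abs_div, abs_of_pos (pow_pos hσ 2)]
      _ ≤ Q (x + t • v) * ((A + ‖v‖ * ‖x + t • v‖) / σ ^ 2) := by
            apply mul_le_mul (hwle j _) _ (div_nonneg (abs_nonneg _) (pow_pos hσ 2).le)
              (hQpos _).le
            gcongr
      _ ≤ (rexp (‖v‖ ^ 2 / (2 * σ ^ 2)) * ∑ u, rexp (-‖x - θ u‖ ^ 2 / (4 * σ ^ 2))) *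
              (((A + ‖v‖ + 1) * ((1 + ‖v‖) + ‖x‖)) / σ ^ 2) := by
            refine mul_le_mul hQb ?_ (div_nonneg ?_ (pow_pos hσ 2).le) (by positivity)
            · gcongr
              nlinarith [norm_nonneg x, norm_nonneg v, norm_nonneg (x + t • v), hz1, hAnn]
            · exact add_nonneg hAnn (by positivity)
      _ = K * ((∑ u, rexp (-‖x - θ u‖ ^ 2 / (4 * σ ^ 2))) * ((1 + ‖v‖) + ‖x‖)) := by
            rw [hK]; ring
    · -- the derivative
      intro x t
      exact hasDerivAt_wline hσ θ β v hθv j hk x t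
  -- Step E : ∫ w_j S = 0
  have hwS_int : ∀ j, Integrable (fun x => (Q x * (N j x / D x)) * (P x / D x)) := by
    intro j
    apply (hQint M₀ hM₀nn).mono' ((hcontw j).mul hcontS).aestronglyMeasurable
    refine Filter.Eventually.of_forall fun x => ?_
    show ‖(Q x * (N j x / D x)) * (P x / D x)‖ ≤ _
    rw [Real.norm_eq_abs, abs_mul, abs_of_nonneg (hwnn j x)]
    calc (Q x * (N j x / D x)) * |P x / D x| ≤ Q x * M₀ :=
          mul_le_mul (hwle j x) (hSabs x) (abs_nonneg _) (hQpos x).le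
    _ ≤ Q x * (M₀ + ‖x‖) := by
          apply mul_le_mul_of_nonneg_left _ (hQpos x).le
          nlinarith [norm_nonneg x]
  have hIa : ∀ j, Integrable (fun x => (Q x * (N j x / D x)) * (⟪β j, v⟫ - ⟪x, v⟫)) := by
    intro j
    apply ((hQint |⟪β j, v⟫| (abs_nonneg _)).const_mul (1 + ‖v‖)).mono'
      ((hcontw j).mul (continuous_const.sub hcontiv)).aestronglyMeasurable
    refine Filter.Eventually.of_forall fun x => ?_
    show ‖(Q x * (N j x / D x)) * (⟪β j, v⟫ - ⟪x, v⟫)‖ ≤ _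
    rw [Real.norm_eq_abs, abs_mul, abs_of_nonneg (hwnn j x)]
    have h1 : |⟪β j, v⟫ - ⟪x, v⟫| ≤ |⟪β j, v⟫| + ‖v‖ * ‖x‖ := by
      have := abs_sub (⟪β j, v⟫ : ℝ) ⟪x, v⟫
      have h2 : |⟪x, v⟫| ≤ ‖x‖ * ‖v‖ := abs_real_inner_le_norm _ _
      nlinarith
    calc (Q x * (N j x / D x)) * |⟪β j, v⟫ - ⟪x, v⟫|
        ≤ Q x * (|⟪β j, v⟫| + ‖v‖ * ‖x‖) :=
          mul_le_mul (hwle j x) h1 (abs_nonneg _) (hQpos x).le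
    _ ≤ (1 + ‖v‖) * (Q x * (|⟪β j, v⟫| + ‖x‖)) := by
          nlinarith [hQpos x, norm_nonneg x, norm_nonneg v, abs_nonneg (⟪β j, v⟫ : ℝ),
            mul_nonneg (hQpos x).le (norm_nonneg x),
            mul_nonneg (mul_nonneg (hQpos x).le (norm_nonneg x)) (norm_nonneg v),
            mul_nonneg (mul_nonneg (hQpos x).le (abs_nonneg (⟪β j, v⟫ : ℝ))) (norm_nonneg v)]
  have hIb : ∀ j, Integrable (fun x =>
      (Q x * (N j x / D x)) * (⟪β j, v⟫ - ⟪x, v⟫ - P x / D x)) := by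
    intro j
    apply ((hQint (|⟪β j, v⟫| + M₀) (by positivity)).const_mul (1 + ‖v‖)).mono'
      ((hcontw j).mul ((continuous_const.sub hcontiv).sub hcontS)).aestronglyMeasurable
    refine Filter.Eventually.of_forall fun x => ?_
    show ‖(Q x * (N j x / D x)) * (⟪β j, v⟫ - ⟪x, v⟫ - P x / D x)‖ ≤ _
    rw [Real.norm_eq_abs, abs_mul, abs_of_nonneg (hwnn j x)]
    have h1 : |⟪β j, v⟫ - ⟪x, v⟫ - P x / D x| ≤ (|⟪β j, v⟫| + M₀) + ‖v‖ * ‖x‖ := by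
      have ha := abs_sub (⟪β j, v⟫ - ⟪x, v⟫ : ℝ) (P x / D x)
      have hb := abs_sub (⟪β j, v⟫ : ℝ) ⟪x, v⟫
      have h2 : |⟪x, v⟫| ≤ ‖x‖ * ‖v‖ := abs_real_inner_le_norm _ _
      have h3 := hSabs x
      nlinarith
    calc (Q x * (N j x / D x)) * |⟪β j, v⟫ - ⟪x, v⟫ - P x / D x|
        ≤ Q x * ((|⟪β j, v⟫| + M₀) + ‖v‖ * ‖x‖) :=
          mul_le_mul (hwle j x) h1 (abs_nonneg _) (hQpos x).le
    _ ≤ (1 + ‖v‖) * (Q x * ((|⟪β j, v⟫| + M₀) + ‖x‖)) := by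
          nlinarith [hQpos x, norm_nonneg x, norm_nonneg v, abs_nonneg (⟪β j, v⟫ : ℝ), hM₀nn,
            mul_nonneg (hQpos x).le (norm_nonneg x),
            mul_nonneg (mul_nonneg (hQpos x).le (norm_nonneg x)) (norm_nonneg v),
            mul_nonneg (mul_nonneg (hQpos x).le
              (add_nonneg (abs_nonneg (⟪β j, v⟫ : ℝ)) hM₀nn)) (norm_nonneg v)]
  have hE2 : ∀ j, ∫ x, (Q x * (N j x / D x)) * (P x / D x) = 0 := by
    intro j
    have hs := hStein j
    have hpt : ∀ x, (Q x * (N j x / D x)) * ((⟪β j, v⟫ - ⟪x, v⟫ - P x / D x) / σ ^ 2)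
        = (σ ^ 2)⁻¹ * ((Q x * (N j x / D x)) * (⟪β j, v⟫ - ⟪x, v⟫ - P x / D x)) :=
      fun x => by ring
    simp only [hpt] at hs
    rw [integral_const_mul] at hs
    have hzero : ∫ x, (Q x * (N j x / D x)) * (⟪β j, v⟫ - ⟪x, v⟫ - P x / D x) = 0 := by
      rcases mul_eq_zero.1 hs with h | h
      · exact absurd h (by positivity)
      · exact h
    have hsub := integral_sub (hIa j) (hIb j)
    have hpt2 : (fun x => (Q x * (N j x / D x)) * (⟪β j, v⟫ - ⟪x, v⟫)
        - (Q x * (N j x / D x)) * (⟪β j, v⟫ - ⟪x, v⟫ - P x / D x))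
        = fun x => (Q x * (N j x / D x)) * (P x / D x) := funext fun x => by ring
    rw [hpt2, hC j, hzero, sub_zero] at hsub
    exact hsub
  -- Step F : ∫ Q S² = 0
  have hQS2int : Integrable (fun x => Q x * (P x / D x) ^ 2) := by
    apply (hQint (M₀ * M₀) (mul_nonneg hM₀nn hM₀nn)).mono'
      (hcontQ.mul (hcontS.pow 2)).aestronglyMeasurable
    refine Filter.Eventually.of_forall fun x => ?_
    have hs := hSabs x
    have h1 : (P x / D x) ^ 2 ≤ M₀ * M₀ := by nlinarith [abs_nonneg (P x / D x), sq_abs (P x / D x)]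
    show ‖Q x * (P x / D x) ^ 2‖ ≤ _
    rw [Real.norm_eq_abs, abs_mul, abs_of_pos (hQpos x), abs_of_nonneg (sq_nonneg _)]
    calc Q x * (P x / D x) ^ 2 ≤ Q x * (M₀ * M₀) :=
          mul_le_mul_of_nonneg_left h1 (hQpos x).le
    _ ≤ Q x * (M₀ * M₀ + ‖x‖) := by
          apply mul_le_mul_of_nonneg_left _ (hQpos x).le
          nlinarith [norm_nonneg x]
  have hFin : ∫ x, Q x * (P x / D x) ^ 2 = 0 := by
    have hptF : ∀ x, ∑ j, ⟪β j, v⟫ * ((Q x * (N j x / D x)) * (P x / D x))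
        = Q x * (P x / D x) ^ 2 := by
      intro x
      have h1 : ∑ j, ⟪β j, v⟫ * ((Q x * (N j x / D x)) * (P x / D x))
          = (Q x * (P x / D x) / D x) * ∑ j, ⟪β j, v⟫ * N j x := by
        rw [Finset.mul_sum]
        exact Finset.sum_congr rfl fun j _ => by ring
      rw [h1]
      have hP : ∑ j, ⟪β j, v⟫ * N j x = P x := rfl
      rw [hP]
      field_simp
    have hsum := integral_finset_sum Finset.univ
      (fun j (_ : j ∈ Finset.univ) => ((hwS_int j).const_mul (⟪β j, v⟫ : ℝ)))
    calc ∫ x, Q x * (P x / D x) ^ 2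
        = ∫ x, ∑ j, ⟪β j, v⟫ * ((Q x * (N j x / D x)) * (P x / D x)) := by
          congr 1; funext x; rw [hptF x]
    _ = ∑ j, ∫ x, ⟪β j, v⟫ * ((Q x * (N j x / D x)) * (P x / D x)) := hsum
    _ = 0 := by
          refine Finset.sum_eq_zero fun j _ => ?_
          rw [integral_const_mul, hE2 j, mul_zero]
  -- Step G : pointwise vanishing
  have hae := (integral_eq_zero_iff_of_nonneg
    (fun x => mul_nonneg (hQpos x).le (sq_nonneg _)) hQS2int).1 hFin
  have hfun : (fun x => Q x * (P x / D x) ^ 2) = fun _ => (0:ℝ) :=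
    (Continuous.ae_eq_iff_eq volume (hcontQ.mul (hcontS.pow 2)) continuous_const).1 hae
  have keyid : ∀ x : EuclideanSpace ℝ (Fin d),
      ∑ ℓ, ⟪β ℓ, v⟫ * rexp (-‖x - β ℓ‖ ^ 2 / (2 * σ ^ 2)) = 0 := by
    intro x
    have h0 : Q x * (P x / D x) ^ 2 = 0 := congrFun hfun x
    have hS0 : P x / D x = 0 := by
      rcases mul_eq_zero.1 h0 with h | h
      · exact absurd h (hQpos x).ne'
      · exact pow_eq_zero_iff two_ne_zero |>.1 h
    have hPx : P x = P x / D x * D x := (div_mul_cancel₀ _ (hDpos x).ne').symm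
    rw [hS0, zero_mul] at hPx
    exact hPx
  have h1 := maxcoef_nonpos hk hσ β v keyid i
  have keyneg : ∀ x : EuclideanSpace ℝ (Fin d),
      ∑ ℓ, ⟪β ℓ, -v⟫ * rexp (-‖x - β ℓ‖ ^ 2 / (2 * σ ^ 2)) = 0 := by
    intro x
    have hx := keyid x
    simp only [inner_neg_right, neg_mul]
    rw [Finset.sum_neg_distrib]
    rw [hx, neg_zero]
  have h2 := maxcoef_nonpos hk hσ β (-v) keyneg i
  rw [inner_neg_right] at h2
  linarith
end

section
/- Variance lower bound for a logistic transform of a Gaussian: let a, w be fixed reals, X ~ N(0,1), and Y = 1/(1 + e^{-(X-a)w}). Then Var(Y) ≥ (|w|⁵/48)·e^{-4(|w|+2|a|)²}. -/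
open MeasureTheory ProbabilityTheory Real

section LogisticVarAux

lemma cube_le_exp' {x : ℝ} (hx : 0 ≤ x) : (1 + x / 3) ^ 3 ≤ Real.exp x := by
  have h := Real.add_one_le_exp (x / 3)
  have h0 : (0 : ℝ) ≤ 1 + x / 3 := by linarith
  calc (1 + x / 3) ^ 3 ≤ Real.exp (x / 3) ^ 3 := by
        apply pow_le_pow_left₀ h0 (by linarith)
    _ = Real.exp x := by
        rw [← Real.exp_nat_mul]; congr 1; push_cast; ring

lemma quart_le_exp' {x : ℝ} (hx : 0 ≤ x) : (1 + x / 4) ^ 4 ≤ Real.exp x := by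
  have h := Real.add_one_le_exp (x / 4)
  have h0 : (0 : ℝ) ≤ 1 + x / 4 := by linarith
  calc (1 + x / 4) ^ 4 ≤ Real.exp (x / 4) ^ 4 := by
        apply pow_le_pow_left₀ h0 (by linarith)
    _ = Real.exp x := by
        rw [← Real.exp_nat_mul]; congr 1; push_cast; ring

lemma sigmoid_lb' {m : ℝ} (h0 : 0 ≤ m) (h1 : m ≤ 1) :
    1 / 2 + m / 5 ≤ (1 + Real.exp (-m))⁻¹ := by
  have h3 : (1 + m / 3) ^ 3 ≤ Real.exp m := cube_le_exp' h0
  have hp : (0 : ℝ) < 5 + 2 * m := by linarith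
  have hq : (0 : ℝ) < 5 - 2 * m := by linarith
  have hfrac : (5 + 2 * m) / (5 - 2 * m) ≤ Real.exp m := by
    apply le_trans _ h3
    rw [div_le_iff₀ hq]
    nlinarith [sq_nonneg m, mul_nonneg h0 h0, mul_nonneg (mul_nonneg h0 h0) h0]
  have hfp : (0 : ℝ) < (5 + 2 * m) / (5 - 2 * m) := by positivity
  have he : Real.exp (-m) ≤ (5 - 2 * m) / (5 + 2 * m) := by
    rw [Real.exp_neg]
    calc (Real.exp m)⁻¹ ≤ ((5 + 2 * m) / (5 - 2 * m))⁻¹ :=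
          inv_anti₀ hfp hfrac
      _ = (5 - 2 * m) / (5 + 2 * m) := by rw [inv_div]
  have hsum : 1 + Real.exp (-m) ≤ 10 / (5 + 2 * m) := by
    have : 1 + (5 - 2 * m) / (5 + 2 * m) = 10 / (5 + 2 * m) := by
      field_simp; ring
    linarith [this]
  have hpos : (0 : ℝ) < 1 + Real.exp (-m) := by positivity
  calc 1 / 2 + m / 5 = (10 / (5 + 2 * m))⁻¹ := by
        rw [inv_div]; ring
    _ ≤ (1 + Real.exp (-m))⁻¹ := inv_anti₀ hpos hsum

lemma core_ineq (v b : ℝ) (hv : 0 ≤ v) (hb : 0 ≤ b) :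
    v ^ 5 / 48 * Real.exp (-4 * (v + 2 * b) ^ 2)
      ≤ (min v 1 / 5) ^ 2 * ((Real.sqrt (2 * π))⁻¹ * Real.exp (-((b + 2) ^ 2 / 2))) := by
  have hπ : π < 3.15 := Real.pi_lt_d2
  have hsq : Real.sqrt (2 * π) ≤ 2.51 := by
    rw [show (2.51 : ℝ) = Real.sqrt (2.51 ^ 2) from (Real.sqrt_sq (by norm_num)).symm]
    exact Real.sqrt_le_sqrt (by nlinarith)
  have hsqpos : 0 < Real.sqrt (2 * π) := Real.sqrt_pos.2 (by positivity)
  have hF : (0:ℝ) < Real.exp (-((b + 2) ^ 2 / 2)) := Real.exp_pos _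
  have hG0 : (0:ℝ) ≤ Real.exp (-4 * v ^ 2) := (Real.exp_pos _).le
  have hE : Real.exp (-4 * (v + 2 * b) ^ 2)
      ≤ Real.exp (-((b + 2) ^ 2 / 2)) * (Real.exp (2 + 2 / 31) * Real.exp (-4 * v ^ 2)) := by
    rw [← Real.exp_add, ← Real.exp_add]
    apply Real.exp_le_exp.2
    nlinarith [sq_nonneg (b - 2 / 31), mul_nonneg hv hb]
  have he1 : Real.exp 1 ≤ 2.7182818286 := Real.exp_one_lt_d9.le
  have he3 : Real.exp ((2 : ℝ) / 31) ≤ 31 / 29 := by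
    have h := Real.add_one_le_exp (-((2:ℝ) / 31))
    rw [Real.exp_neg] at h
    have hp : (0 : ℝ) < Real.exp ((2:ℝ) / 31) := Real.exp_pos _
    have h3 : (29 / 31 : ℝ) * Real.exp ((2:ℝ) / 31) ≤ 1 := by
      have h4 := mul_le_mul_of_nonneg_right h hp.le
      rwa [inv_mul_cancel₀ (ne_of_gt hp), show (-((2:ℝ) / 31) + 1) = 29 / 31 by norm_num] at h4
    nlinarith
  have hK : Real.exp ((2 : ℝ) + 2 / 31) ≤ 7.9 := by
    have hsplit : Real.exp ((2 : ℝ) + 2 / 31)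
        = Real.exp 1 * Real.exp 1 * Real.exp ((2:ℝ) / 31) := by
      rw [← Real.exp_add, ← Real.exp_add]; norm_num
    rw [hsplit]
    nlinarith [Real.exp_pos ((2:ℝ) / 31), Real.exp_pos (1:ℝ)]
  have hmin0 : 0 ≤ min v 1 := le_min hv zero_le_one
  have hkey : v ^ 5 * Real.exp (-4 * v ^ 2) ≤ 2 / 21 * (min v 1) ^ 2 := by
    have hgoal' : v ^ 5 ≤ 2 / 21 * (min v 1) ^ 2 * Real.exp (4 * v ^ 2) := by
      rcases le_total v 1 with h1 | h1
      · rw [min_eq_left h1]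
        have hc : (1 + 4 * v ^ 2 / 3) ^ 3 ≤ Real.exp (4 * v ^ 2) :=
          cube_le_exp' (by positivity)
        have hp : v ^ 3 ≤ 2 / 21 * (1 + 4 * v ^ 2 / 3) ^ 3 := by
          nlinarith [sq_nonneg (v - 7/10), sq_nonneg (v ^ 2 - v), sq_nonneg v,
            mul_nonneg hv hv, mul_nonneg (mul_nonneg hv hv) hv, sq_nonneg (v^2 - 1/2),
            mul_nonneg (mul_nonneg (mul_nonneg hv hv) hv) hv, sq_nonneg (v^3 - v)]
        calc v ^ 5 = v ^ 2 * v ^ 3 := by ring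
          _ ≤ v ^ 2 * (2 / 21 * (1 + 4 * v ^ 2 / 3) ^ 3) := by
              apply mul_le_mul_of_nonneg_left hp (by positivity)
          _ ≤ v ^ 2 * (2 / 21 * Real.exp (4 * v ^ 2)) := by
              apply mul_le_mul_of_nonneg_left _ (by positivity)
              apply mul_le_mul_of_nonneg_left hc (by norm_num)
          _ = 2 / 21 * v ^ 2 * Real.exp (4 * v ^ 2) := by ring
      · rw [min_eq_right h1]
        have hc : (1 + 4 * v ^ 2 / 4) ^ 4 ≤ Real.exp (4 * v ^ 2) :=
          quart_le_exp' (by positivity)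
        have hp : v ^ 5 ≤ 2 / 21 * (1 + 4 * v ^ 2 / 4) ^ 4 := by
          nlinarith [sq_nonneg (v ^ 2 - v), sq_nonneg (v ^ 2 - 1), sq_nonneg (v - 1),
            mul_nonneg hv hv, sq_nonneg (v ^ 2 - 2 * v),
            mul_le_mul_of_nonneg_left h1 hv,
            mul_nonneg (mul_nonneg hv hv) (sub_nonneg.2 h1)]
        calc v ^ 5 ≤ 2 / 21 * (1 + 4 * v ^ 2 / 4) ^ 4 := hp
          _ ≤ 2 / 21 * Real.exp (4 * v ^ 2) := by
              apply mul_le_mul_of_nonneg_left hc (by norm_num)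
          _ = 2 / 21 * 1 ^ 2 * Real.exp (4 * v ^ 2) := by ring
    calc v ^ 5 * Real.exp (-4 * v ^ 2)
        ≤ 2 / 21 * (min v 1) ^ 2 * Real.exp (4 * v ^ 2) * Real.exp (-4 * v ^ 2) :=
          mul_le_mul_of_nonneg_right hgoal' (Real.exp_nonneg _)
      _ = 2 / 21 * (min v 1) ^ 2 := by
          rw [mul_assoc, ← Real.exp_add, show 4 * v ^ 2 + -4 * v ^ 2 = 0 by ring,
            Real.exp_zero, mul_one]
  have hs' : (2.51 : ℝ)⁻¹ ≤ (Real.sqrt (2 * π))⁻¹ := inv_anti₀ hsqpos hsq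
  calc v ^ 5 / 48 * Real.exp (-4 * (v + 2 * b) ^ 2)
      ≤ v ^ 5 / 48 * (Real.exp (-((b + 2) ^ 2 / 2)) * (Real.exp (2 + 2 / 31)
          * Real.exp (-4 * v ^ 2))) := by
        apply mul_le_mul_of_nonneg_left hE (by positivity)
    _ ≤ v ^ 5 / 48 * (Real.exp (-((b + 2) ^ 2 / 2)) * (7.9 * Real.exp (-4 * v ^ 2))) := by
        apply mul_le_mul_of_nonneg_left _ (by positivity)
        apply mul_le_mul_of_nonneg_left _ hF.le
        exact mul_le_mul_of_nonneg_right hK hG0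
    _ = Real.exp (-((b + 2) ^ 2 / 2)) * 7.9 / 48 * (v ^ 5 * Real.exp (-4 * v ^ 2)) := by ring
    _ ≤ Real.exp (-((b + 2) ^ 2 / 2)) * 7.9 / 48 * (2 / 21 * (min v 1) ^ 2) := by
        apply mul_le_mul_of_nonneg_left hkey (by positivity)
    _ ≤ (min v 1 / 5) ^ 2 * ((2.51 : ℝ)⁻¹ * Real.exp (-((b + 2) ^ 2 / 2))) := by
        nlinarith [mul_nonneg hF.le (sq_nonneg (min v 1))]
    _ ≤ (min v 1 / 5) ^ 2 * ((Real.sqrt (2 * π))⁻¹ * Real.exp (-((b + 2) ^ 2 / 2))) := by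
        apply mul_le_mul_of_nonneg_left _ (by positivity)
        exact mul_le_mul_of_nonneg_right hs' hF.le

lemma gauss_Icc_lb (u w M : ℝ) (huw : u ≤ w) (hM : ∀ x ∈ Set.Icc u w, x ^ 2 ≤ M) :
    (w - u) * ((Real.sqrt (2 * π))⁻¹ * Real.exp (-(M / 2)))
      ≤ ((gaussianReal 0 1) (Set.Icc u w)).toReal := by
  rw [gaussianReal_apply_eq_integral 0 one_ne_zero,
    ENNReal.toReal_ofReal (integral_nonneg fun x => gaussianPDFReal_nonneg 0 1 x)]
  have hpt : ∀ x ∈ Set.Icc u w,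
      (Real.sqrt (2 * π))⁻¹ * Real.exp (-(M / 2)) ≤ gaussianPDFReal 0 1 x := by
    intro x hx
    have hx2 := hM x hx
    unfold gaussianPDFReal
    simp only [NNReal.coe_one, mul_one, sub_zero]
    apply mul_le_mul_of_nonneg_left _ (by positivity)
    apply Real.exp_le_exp.2
    linarith
  have hint : IntegrableOn (gaussianPDFReal 0 1) (Set.Icc u w) volume :=
    (integrable_gaussianPDFReal 0 1).integrableOn
  have h := setIntegral_ge_of_const_le measurableSet_Icc
    (by rw [Real.volume_Icc]; exact ENNReal.ofReal_ne_top) hpt hint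
  rw [measureReal_def, Real.volume_Icc, ENNReal.toReal_ofReal (by linarith), smul_eq_mul] at h
  linarith [h]

lemma var_lb {mu : Measure ℝ} [IsProbabilityMeasure mu] {Y : ℝ → ℝ}
    (hY : Measurable Y) (hbd : ∀ x, Y x ∈ Set.Icc (0 : ℝ) 1)
    {S : Set ℝ} (hS : MeasurableSet S) {d : ℝ} (hd : 0 ≤ d)
    (h : ∀ x ∈ S, d ≤ |Y x - ∫ x, Y x ∂mu|) :
    d ^ 2 * (mu S).toReal ≤ variance Y mu := by
  have hmem : MemLp Y 2 mu :=
    memLp_of_bounded (ae_of_all _ hbd) hY.aestronglyMeasurable 2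
  set m := ∫ x, Y x ∂mu with hm
  have hmemsub : MemLp (Y - fun _ => m) 2 mu := hmem.sub (memLp_const m)
  have hint : Integrable (fun x => (Y x - m) ^ 2) mu := hmemsub.integrable_sq
  have h1 : d ^ 2 * (mu S).toReal ≤ ∫ x in S, (Y x - m) ^ 2 ∂mu := by
    apply setIntegral_ge_of_const_le_real hS (measure_ne_top _ _) _ hint.integrableOn
    intro x hx
    calc d ^ 2 ≤ |Y x - m| ^ 2 := pow_le_pow_left₀ hd (h x hx) 2
      _ = (Y x - m) ^ 2 := sq_abs _
  have h2 : ∫ x in S, (Y x - m) ^ 2 ∂mu ≤ ∫ x, (Y x - m) ^ 2 ∂mu :=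
    setIntegral_le_integral hint (ae_of_all _ fun x => sq_nonneg _)
  have h3 : variance Y mu = ∫ x, (Y x - m) ^ 2 ∂mu := by
    rw [variance_eq_integral hY.aemeasurable]
  linarith

end LogisticVarAux

/-- **Variance lower bound** (Lemma): for `X ~ N(0,1)` and `Y = 1/(1 + e^{-(X-a)w})`,
`Var(Y) ≥ (|w|⁵/48)·e^{-4(|w|+2|a|)²}`. -/
theorem logistic_gaussian_variance_lower_bound (a w : ℝ) :
    |w| ^ 5 / 48 * Real.exp (-4 * (|w| + 2 * |a|) ^ 2)
      ≤ variance (fun x => (1 + Real.exp (-(x - a) * w))⁻¹) (gaussianReal 0 1) := by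
  by_cases hw : w = 0
  · subst hw
    simp only [abs_zero]
    norm_num
  set Y : ℝ → ℝ := fun x => (1 + Real.exp (-(x - a) * w))⁻¹ with hYdef
  set mu := gaussianReal 0 1 with hmu
  set v := |w| with hvdef
  have hv : 0 < v := abs_pos.2 hw
  set c : ℝ := min 1 v⁻¹ with hcdef
  have hc0 : 0 < c := lt_min one_pos (inv_pos.2 hv)
  have hc1 : c ≤ 1 := min_le_left _ _
  have hcv : c * v = min v 1 := by
    rw [hcdef]
    rcases le_total v 1 with h | h
    · have h1 : (1:ℝ) ≤ v⁻¹ := one_le_inv_iff₀.2 ⟨hv, h⟩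
      rw [min_eq_left h1, min_eq_left h, one_mul]
    · have h1 : v⁻¹ ≤ 1 := inv_le_one_of_one_le₀ h
      rw [min_eq_right h1, min_eq_right h, inv_mul_cancel₀ (ne_of_gt hv)]
  set m' : ℝ := min v 1 with hm'def
  have hm'0 : 0 < m' := lt_min hv one_pos
  have hm'1 : m' ≤ 1 := min_le_right _ _
  set s0 : ℝ := (1 + Real.exp (-m'))⁻¹ with hs0def
  have hs0 : 1 / 2 + m' / 5 ≤ s0 := sigmoid_lb' hm'0.le hm'1
  set d : ℝ := s0 - 1 / 2 with hddef
  have hd5 : m' / 5 ≤ d := by simp only [hddef]; linarith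
  have hd0 : 0 ≤ d := le_trans (by positivity) hd5
  have hbd : ∀ x, Y x ∈ Set.Icc (0:ℝ) 1 := by
    intro x
    have h1 : (0:ℝ) < 1 + Real.exp (-(x - a) * w) := by positivity
    constructor
    · positivity
    · apply inv_le_one_of_one_le₀
      linarith [Real.exp_pos (-(x - a) * w)]
  have hY : Measurable Y := by
    apply Measurable.inv
    apply Measurable.const_add
    apply Real.measurable_exp.comp
    exact (measurable_id.sub_const a).neg.mul_const w
  set m : ℝ := ∫ x, Y x ∂mu with hmdefn
  -- identity : (1 + exp m')⁻¹ = 1 - s0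
  have hid : (1 + Real.exp m')⁻¹ = 1 - s0 := by
    rw [hs0def, Real.exp_neg]
    have h1 : (0:ℝ) < Real.exp m' := Real.exp_pos _
    field_simp
    ring
  -- pointwise bounds
  have hge : ∀ x : ℝ, -(x - a) * w ≤ -m' → s0 ≤ Y x := by
    intro x hx
    have h1 : Real.exp (-(x - a) * w) ≤ Real.exp (-m') := Real.exp_le_exp.2 hx
    have h2 : (0:ℝ) < 1 + Real.exp (-(x - a) * w) := by positivity
    exact inv_anti₀ h2 (by linarith)
  have hle : ∀ x : ℝ, m' ≤ -(x - a) * w → Y x ≤ 1 - s0 := by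
    intro x hx
    have h1 : Real.exp m' ≤ Real.exp (-(x - a) * w) := Real.exp_le_exp.2 hx
    have h2 : (0:ℝ) < 1 + Real.exp m' := by positivity
    rw [← hid]
    exact inv_anti₀ h2 (by linarith)
  -- measure lower bounds
  set b := |a| with hbdef
  have hb0 : 0 ≤ b := abs_nonneg a
  set C : ℝ := (Real.sqrt (2 * π))⁻¹ * Real.exp (-((b + 2) ^ 2 / 2)) with hCdef
  have hIcc1 : C ≤ (mu (Set.Icc (b + 1) (b + 2))).toReal := by
    have h := gauss_Icc_lb (b + 1) (b + 2) ((b + 2) ^ 2) (by linarith)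
      (fun x hx => by nlinarith [hx.1, hx.2])
    rw [show b + 2 - (b + 1) = (1:ℝ) by ring, one_mul] at h
    exact h
  have hIcc2 : C ≤ (mu (Set.Icc (-(b + 2)) (-(b + 1)))).toReal := by
    have h := gauss_Icc_lb (-(b + 2)) (-(b + 1)) ((b + 2) ^ 2) (by linarith)
      (fun x hx => by nlinarith [hx.1, hx.2])
    rw [show -(b + 1) - -(b + 2) = (1:ℝ) by ring, one_mul] at h
    exact h
  have hA : C ≤ (mu (Set.Ici (a + c))).toReal := by
    refine le_trans hIcc1 (ENNReal.toReal_mono (measure_ne_top _ _) (measure_mono ?_))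
    intro x hx
    have := hx.1
    have ha : a ≤ b := le_abs_self a
    simp only [Set.mem_Ici]
    linarith
  have hB : C ≤ (mu (Set.Iic (a - c))).toReal := by
    refine le_trans hIcc2 (ENNReal.toReal_mono (measure_ne_top _ _) (measure_mono ?_))
    intro x hx
    have := hx.2
    have ha : -b ≤ a := neg_abs_le a
    simp only [Set.mem_Iic]
    linarith
  -- choose the side
  have hmain : d ^ 2 * C ≤ variance Y mu := by
    rcases le_total m (1 / 2) with hm | hm
    · rcases lt_or_gt_of_ne hw with hneg | hpos
      · -- w < 0 : Y ≥ s0 on Iic (a - c)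
        have hptw : ∀ x ∈ Set.Iic (a - c), d ≤ |Y x - m| := by
          intro x hx
          have hxa : x - a ≤ -c := by simpa [Set.mem_Iic] using by linarith [hx.out]
          have hvw : v = -w := abs_of_neg hneg
          have harg : -(x - a) * w ≤ -m' := by
            have h1 : c ≤ -(x - a) := by linarith
            have h2 : -(x - a) * w ≤ c * w :=
              mul_le_mul_of_nonpos_right h1 hneg.le
            calc -(x - a) * w ≤ c * w := h2
              _ = -(c * v) := by rw [hvw]; ring
              _ ≤ -m' := by rw [hcv]
          have h3 := hge x harg
          calc d ≤ Y x - m := by simp only [hddef]; linarith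
            _ ≤ |Y x - m| := le_abs_self _
        calc d ^ 2 * C ≤ d ^ 2 * (mu (Set.Iic (a - c))).toReal := by
              apply mul_le_mul_of_nonneg_left hB (by positivity)
          _ ≤ variance Y mu := var_lb hY hbd measurableSet_Iic hd0 hptw
      · -- w > 0 : Y ≥ s0 on Ici (a + c)
        have hptw : ∀ x ∈ Set.Ici (a + c), d ≤ |Y x - m| := by
          intro x hx
          have hxa : c ≤ x - a := by linarith [hx.out]
          have hvw : v = w := abs_of_pos hpos
          have harg : -(x - a) * w ≤ -m' := by
            have h2 : c * w ≤ (x - a) * w := mul_le_mul_of_nonneg_right hxa hpos.le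
            have h3 : c * w = m' := by rw [← hcv, hvw]
            linarith
          have h3 := hge x harg
          calc d ≤ Y x - m := by simp only [hddef]; linarith
            _ ≤ |Y x - m| := le_abs_self _
        calc d ^ 2 * C ≤ d ^ 2 * (mu (Set.Ici (a + c))).toReal := by
              apply mul_le_mul_of_nonneg_left hA (by positivity)
          _ ≤ variance Y mu := var_lb hY hbd measurableSet_Ici hd0 hptw
    · rcases lt_or_gt_of_ne hw with hneg | hpos
      · -- w < 0 : Y ≤ 1 - s0 on Ici (a + c)
        have hptw : ∀ x ∈ Set.Ici (a + c), d ≤ |Y x - m| := by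
          intro x hx
          have hxa : c ≤ x - a := by linarith [hx.out]
          have hvw : v = -w := abs_of_neg hneg
          have harg : m' ≤ -(x - a) * w := by
            have h2 : (x - a) * w ≤ c * w := mul_le_mul_of_nonpos_right hxa hneg.le
            have h3 : c * w = -m' := by rw [← hcv, hvw]; ring
            linarith
          have h3 := hle x harg
          calc d ≤ m - Y x := by simp only [hddef]; linarith
            _ ≤ |Y x - m| := by rw [abs_sub_comm]; exact le_abs_self _
        calc d ^ 2 * C ≤ d ^ 2 * (mu (Set.Ici (a + c))).toReal := by
              apply mul_le_mul_of_nonneg_left hA (by positivity)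
          _ ≤ variance Y mu := var_lb hY hbd measurableSet_Ici hd0 hptw
      · -- w > 0 : Y ≤ 1 - s0 on Iic (a - c)
        have hptw : ∀ x ∈ Set.Iic (a - c), d ≤ |Y x - m| := by
          intro x hx
          have hxa : x - a ≤ -c := by linarith [hx.out]
          have hvw : v = w := abs_of_pos hpos
          have harg : m' ≤ -(x - a) * w := by
            have h2 : c * w ≤ -(x - a) * w :=
              mul_le_mul_of_nonneg_right (by linarith) hpos.le
            have h3 : c * w = m' := by rw [← hcv, hvw]
            linarith
          have h3 := hle x harg
          calc d ≤ m - Y x := by simp only [hddef]; linarith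
            _ ≤ |Y x - m| := by rw [abs_sub_comm]; exact le_abs_self _
        calc d ^ 2 * C ≤ d ^ 2 * (mu (Set.Iic (a - c))).toReal := by
              apply mul_le_mul_of_nonneg_left hB (by positivity)
          _ ≤ variance Y mu := var_lb hY hbd measurableSet_Iic hd0 hptw
  -- final chain
  calc |w| ^ 5 / 48 * Real.exp (-4 * (|w| + 2 * |a|) ^ 2)
      ≤ (m' / 5) ^ 2 * C := core_ineq v b hv.le hb0
    _ ≤ d ^ 2 * C := by
        apply mul_le_mul_of_nonneg_right _ (by positivity)
        exact pow_le_pow_left₀ (by positivity) hd5 2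
    _ ≤ variance Y mu := hmain
end
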